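/- arXiv:2302.02092 — 4 statements merged into one kernel-verified Lean document; each statement's English description precedes it below -/
import Mathlib

section
/- Let d ≥ 1, σ > 0, μ ∈ ℝ^d with μ ≠ 0, and 0 ≤ ε < ‖μ‖. For class means m₋, m₊ ∈ ℝ^d subject to ‖m₋ − (−μ)‖ ≤ ε and ‖m₊ − μ‖ ≤ ε, and affine classifiers f_{α,β}(x) = sign(⟨α,x⟩ + β) with α ≠ 0, define Err(m₋, m₊; α, β) = ½·N(m₋, σ²I_d)({x : ⟨α,x⟩ + β ≥ 0}) + ½·N(m₊, σ²I_d)({x : ⟨α,x⟩ + β ≤ 0}). Then the maximin equals the minimax: sup over admissible (m₋, m₊) of inf over (α, β) of Err equals inf over (α, β) of sup over admissible (m₋, m₊) of Err, and the common value equals Φ(−(‖μ‖ − ε)/σ) = Err(−(1 − ε/‖μ‖)μ, (1 − ε/‖μ‖)μ; μ, 0), attained at the shifted means m_± = ±(1 − ε/‖μ‖)μ together with the classifier α = μ, β = 0. -/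
open MeasureTheory ProbabilityTheory
open scoped RealInnerProductSpace NNReal

/-- The multivariate Gaussian measure `N(m, v·I_d)` on `ℝ^d = EuclideanSpace ℝ (Fin d)`. -/
noncomputable def gaussN (d : ℕ) (m : EuclideanSpace ℝ (Fin d)) (v : ℝ≥0) :
    Measure (EuclideanSpace ℝ (Fin d)) :=
  (Measure.pi fun i => gaussianReal (m i) v).map
    (MeasurableEquiv.toLp 2 (Fin d → ℝ))

/-- The standard Gaussian cumulative distribution function `Φ`. -/
noncomputable def Phi (z : ℝ) : ℝ := (gaussianReal 0 1 (Set.Iic z)).toReal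

section Aux

open Real Set
open scoped ENNReal

lemma gauss_pdf_conv (m1 m2 : ℝ) (v1 v2 : ℝ≥0) (hv1 : v1 ≠ 0) (hv2 : v2 ≠ 0) (u x : ℝ) :
    gaussianPDFReal m1 v1 x * gaussianPDFReal m2 v2 (u - x)
      = gaussianPDFReal (m1 + m2) (v1 + v2) u *
        gaussianPDFReal ((m1 * v2 + (u - m2) * v1) / (v1 + v2)) (v1 * v2 / (v1 + v2)) x := by
  have h1 : (0:ℝ) < v1 := lt_of_le_of_ne v1.coe_nonneg (by exact_mod_cast (Ne.symm hv1))
  have h2 : (0:ℝ) < v2 := lt_of_le_of_ne v2.coe_nonneg (by exact_mod_cast (Ne.symm hv2))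
  have h12 : (0:ℝ) < (v1:ℝ) + v2 := by linarith
  have hπ : (0:ℝ) < 2 * π := by positivity
  simp only [gaussianPDFReal]
  have hcoe : ((v1 * v2 / (v1 + v2) : ℝ≥0) : ℝ) = (v1:ℝ) * v2 / ((v1:ℝ) + v2) := by
    push_cast; ring
  have hcoe2 : ((v1 + v2 : ℝ≥0) : ℝ) = (v1:ℝ) + v2 := by push_cast; ring
  rw [hcoe, hcoe2]
  have hconst : (√(2 * π * v1))⁻¹ * (√(2 * π * v2))⁻¹
      = (√(2 * π * ((v1:ℝ) + v2)))⁻¹ * (√(2 * π * ((v1:ℝ) * v2 / ((v1:ℝ) + v2))))⁻¹ := by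
    rw [← mul_inv, ← mul_inv, ← Real.sqrt_mul (by positivity), ← Real.sqrt_mul (by positivity)]
    congr 1
    field_simp
  have hexp : rexp (-(x - m1) ^ 2 / (2 * v1)) * rexp (-(u - x - m2) ^ 2 / (2 * v2))
      = rexp (-(u - (m1 + m2)) ^ 2 / (2 * ((v1:ℝ) + v2))) *
        rexp (-(x - (m1 * v2 + (u - m2) * v1) / ((v1:ℝ) + v2)) ^ 2 /
          (2 * ((v1:ℝ) * v2 / ((v1:ℝ) + v2)))) := by
    rw [← Real.exp_add, ← Real.exp_add]
    congr 1
    field_simp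
    ring
  calc (√(2 * π * v1))⁻¹ * rexp (-(x - m1) ^ 2 / (2 * v1)) *
        ((√(2 * π * v2))⁻¹ * rexp (-(u - x - m2) ^ 2 / (2 * v2)))
      = ((√(2 * π * v1))⁻¹ * (√(2 * π * v2))⁻¹) *
        (rexp (-(x - m1) ^ 2 / (2 * v1)) * rexp (-(u - x - m2) ^ 2 / (2 * v2))) := by ring
    _ = _ := by rw [hconst, hexp]; ring

lemma gauss_conv (m1 m2 : ℝ) (v1 v2 : ℝ≥0) :
    ((gaussianReal m1 v1).prod (gaussianReal m2 v2)).map (fun p : ℝ × ℝ => p.1 + p.2)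
      = gaussianReal (m1 + m2) (v1 + v2) := by
  by_cases hv1 : v1 = 0
  · subst hv1
    rw [gaussianReal_zero_var, Measure.dirac_prod, Measure.map_map (by fun_prop) (by fun_prop)]
    have : ((fun p : ℝ × ℝ => p.1 + p.2) ∘ Prod.mk m1) = (m1 + ·) := rfl
    rw [this, gaussianReal_map_const_add, zero_add, add_comm m2 m1]
  by_cases hv2 : v2 = 0
  · subst hv2
    rw [gaussianReal_zero_var, Measure.prod_dirac, Measure.map_map (by fun_prop) (by fun_prop)]
    have : ((fun p : ℝ × ℝ => p.1 + p.2) ∘ (fun x => (x, m2))) = (· + m2) := rfl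
    rw [this, gaussianReal_map_add_const, add_zero]
  -- main case
  have hv12 : v1 + v2 ≠ 0 := by simp [hv1]
  have hv' : v1 * v2 / (v1 + v2) ≠ 0 := by
    simp only [ne_eq, div_eq_zero_iff, mul_eq_zero, not_or]
    exact ⟨⟨hv1, hv2⟩, hv12⟩
  have hmeas : Measurable (fun p : ℝ × ℝ => p.1 + p.2) := by fun_prop
  refine Measure.ext_of_Iic _ _ (fun z => ?_)
  rw [Measure.map_apply hmeas measurableSet_Iic]
  have hpre : (fun p : ℝ × ℝ => p.1 + p.2) ⁻¹' Iic z = {p : ℝ × ℝ | p.1 + p.2 ≤ z} := rfl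
  rw [hpre, Measure.prod_apply (by exact measurableSet_le (by fun_prop) (by fun_prop))]
  have hslice : ∀ x : ℝ, gaussianReal m2 v2 (Prod.mk x ⁻¹' {p : ℝ × ℝ | p.1 + p.2 ≤ z})
      = ∫⁻ u in Iic z, gaussianPDF m2 v2 (u - x) ∂volume := by
    intro x
    have h1 : (Prod.mk x ⁻¹' {p : ℝ × ℝ | p.1 + p.2 ≤ z}) = Iic (z - x) := by
      ext y; simp only [Set.mem_preimage, Set.mem_setOf_eq, Set.mem_Iic]
      constructor <;> intro h <;> linarith
    rw [h1, gaussianReal_apply _ hv2, ← lintegral_indicator measurableSet_Iic,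
      ← lintegral_indicator measurableSet_Iic,
      ← lintegral_add_right_eq_self
        (fun y => (Iic (z - x)).indicator (gaussianPDF m2 v2) y) (-x)]
    congr 1
    ext u
    by_cases hu : u ≤ z
    · rw [Set.indicator_of_mem (by simpa using hu),
        Set.indicator_of_mem (by simp [Set.mem_Iic]; linarith)]
      ring_nf
    · rw [Set.indicator_of_notMem (by simpa using hu),
        Set.indicator_of_notMem (by simp [Set.mem_Iic]; exact lt_of_not_ge hu)]
  simp_rw [hslice]
  rw [gaussianReal_of_var_ne_zero m1 hv1,
    lintegral_withDensity_eq_lintegral_mul _ (measurable_gaussianPDF _ _)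
      (Measurable.lintegral_prod_right (f := fun (x : ℝ) (u : ℝ) => gaussianPDF m2 v2 (u - x))
        ((measurable_gaussianPDF m2 v2).comp (measurable_snd.sub measurable_fst)))]
  have hpull : ∀ x : ℝ, gaussianPDF m1 v1 x * ∫⁻ u in Iic z, gaussianPDF m2 v2 (u - x) ∂volume
      = ∫⁻ u in Iic z, gaussianPDF m1 v1 x * gaussianPDF m2 v2 (u - x) ∂volume := by
    intro x
    have hm2 : Measurable (gaussianPDF m2 v2) := measurable_gaussianPDF m2 v2
    exact (lintegral_const_mul _ (hm2.comp (measurable_id.sub_const x))).symm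
  simp only [Pi.mul_apply]
  simp_rw [hpull]
  rw [lintegral_lintegral_swap]
  swap
  · exact (((measurable_gaussianPDF m1 v1).comp measurable_fst).mul
      ((measurable_gaussianPDF m2 v2).comp (measurable_snd.sub measurable_fst))).aemeasurable
  have hinner : ∀ u : ℝ, (∫⁻ x, gaussianPDF m1 v1 x * gaussianPDF m2 v2 (u - x) ∂volume)
      = gaussianPDF (m1 + m2) (v1 + v2) u := by
    intro u
    have hpt : ∀ x : ℝ, gaussianPDF m1 v1 x * gaussianPDF m2 v2 (u - x)
        = gaussianPDF (m1 + m2) (v1 + v2) u *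
          gaussianPDF ((m1 * v2 + (u - m2) * v1) / (v1 + v2)) (v1 * v2 / (v1 + v2)) x := by
      intro x
      simp only [gaussianPDF]
      rw [← ENNReal.ofReal_mul (gaussianPDFReal_nonneg _ _ _),
        ← ENNReal.ofReal_mul (gaussianPDFReal_nonneg _ _ _),
        gauss_pdf_conv m1 m2 v1 v2 hv1 hv2 u x]
    simp_rw [hpt]
    rw [lintegral_const_mul _ (measurable_gaussianPDF _ _),
      lintegral_gaussianPDF_eq_one _ hv', mul_one]
  simp_rw [hinner]
  rw [gaussianReal_apply _ hv12]

lemma map_sum_pi_gaussian : ∀ (n : ℕ) (m : Fin n → ℝ) (v : Fin n → ℝ≥0) (a : Fin n → ℝ)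
    (V : ℝ≥0), ((V : ℝ) = ∑ i, a i ^ 2 * v i) →
    (Measure.pi fun i => gaussianReal (m i) (v i)).map (fun x => ∑ i, a i * x i)
      = gaussianReal (∑ i, a i * m i) V := by
  intro n
  induction n with
  | zero =>
    intro m v a V hV
    simp only [Finset.univ_eq_empty, Finset.sum_empty] at hV ⊢
    have hV0 : V = 0 := by ext; simp [hV]
    rw [hV0, show (fun x : Fin 0 → ℝ => (0:ℝ)) = (fun _ => 0) from rfl, Measure.map_const,
      measure_univ, one_smul, gaussianReal_zero_var]
  | succ n ih =>
    intro m v a V hV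
    have hmp := (measurePreserving_piFinSuccAbove (fun i => gaussianReal (m i) (v i)) 0)
    set e := MeasurableEquiv.piFinSuccAbove (fun _ : Fin (n+1) => ℝ) 0 with he
    have hfun : (fun x : Fin (n+1) → ℝ => ∑ i, a i * x i)
        = (fun p : ℝ × (Fin n → ℝ) => a 0 * p.1 + ∑ j, a j.succ * p.2 j) ∘ e := by
      ext x
      simp only [Function.comp_apply, he, MeasurableEquiv.piFinSuccAbove_apply]
      rw [Fin.sum_univ_succ]
      simp [Fin.succAbove_zero, Fin.tail]
    rw [hfun, ← Measure.map_map (by fun_prop) e.measurable, hmp.map_eq]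
    have hfun2 : (fun p : ℝ × (Fin n → ℝ) => a 0 * p.1 + ∑ j, a j.succ * p.2 j)
        = (fun q : ℝ × ℝ => q.1 + q.2) ∘
          (Prod.map (fun x : ℝ => a 0 * x) (fun y : Fin n → ℝ => ∑ j, a j.succ * y j)) := rfl
    rw [hfun2, ← Measure.map_map (by fun_prop) (by fun_prop),
      ← Measure.map_prod_map _ _ (by fun_prop) (by fun_prop)]
    have h0 : Fin.succAbove (0 : Fin (n+1)) = Fin.succ := Fin.succAbove_zero
    simp only [h0]
    set V' : ℝ≥0 := (∑ j : Fin n, a j.succ ^ 2 * (v j.succ : ℝ)).toNNReal with hV'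
    have hV'c : (V' : ℝ) = ∑ j : Fin n, a j.succ ^ 2 * (v j.succ : ℝ) := by
      rw [hV', Real.coe_toNNReal]
      positivity
    rw [gaussianReal_map_const_mul,
      ih (fun j => m j.succ) (fun j => v j.succ) (fun j => a j.succ) V' hV'c,
      gauss_conv, Fin.sum_univ_succ]
    congr 1
    ext
    push_cast
    rw [hV, Fin.sum_univ_succ, hV'c]

lemma Phi_nonneg (z : ℝ) : 0 ≤ Phi z := ENNReal.toReal_nonneg

lemma Phi_le_one (z : ℝ) : Phi z ≤ 1 := by
  rw [Phi]
  exact ENNReal.toReal_le_of_le_ofReal one_pos.le (by simpa using prob_le_one)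

lemma Phi_mono : Monotone Phi := by
  intro x y hxy
  exact ENNReal.toReal_mono (measure_ne_top _ _) (measure_mono (Set.Iic_subset_Iic.2 hxy))

lemma gauss01_map_neg : (gaussianReal 0 1).map (fun x : ℝ => -x) = gaussianReal 0 1 := by
  have : (fun x : ℝ => -x) = ((-1 : ℝ) * ·) := by funext x; ring
  rw [this, gaussianReal_map_const_mul]
  norm_num

lemma gauss01_Ici (w : ℝ) : (gaussianReal 0 1 (Set.Ici w)).toReal = Phi (-w) := by
  rw [Phi]
  congr 1
  conv_lhs => rw [← gauss01_map_neg]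
  rw [Measure.map_apply measurable_neg measurableSet_Ici]
  congr 1
  ext x
  simp

instance gauss01_noAtoms : NullSingletonClass (gaussianReal 0 1) :=
  ⟨fun x => (gaussianReal_absolutelyContinuous 0 one_ne_zero) (measure_singleton x)⟩

lemma Phi_neg (z : ℝ) : Phi (-z) = 1 - Phi z := by
  rw [← gauss01_Ici]
  have h1 : Set.Ici z = (Set.Iio z)ᶜ := compl_Iio.symm
  rw [h1, measure_compl measurableSet_Iio (measure_ne_top _ _), measure_univ,
    measure_congr Iio_ae_eq_Iic, ENNReal.toReal_sub_of_le prob_le_one ENNReal.one_ne_top]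
  simp [Phi]

lemma Phi_zero : Phi 0 = 1 / 2 := by
  have := Phi_neg 0
  rw [neg_zero] at this
  linarith

lemma Phi_sub_Phi (a b : ℝ) : Phi b - Phi a = ∫ x in a..b, gaussianPDFReal 0 1 x := by
  have key : ∀ z : ℝ, Phi z = ∫ x in Set.Iic z, gaussianPDFReal 0 1 x := by
    intro z
    rw [Phi, gaussianReal_apply_eq_integral 0 one_ne_zero,
      ENNReal.toReal_ofReal (setIntegral_nonneg measurableSet_Iic
        (fun x _ => gaussianPDFReal_nonneg _ _ _))]
  rw [key, key, intervalIntegral.integral_Iic_sub_Iic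
    ((integrable_gaussianPDFReal 0 1).integrableOn) ((integrable_gaussianPDFReal 0 1).integrableOn)]

lemma gaussPDF_even (x : ℝ) : gaussianPDFReal 0 1 (-x) = gaussianPDFReal 0 1 x := by
  simp [gaussianPDFReal]

lemma gaussPDF_cont : Continuous (gaussianPDFReal 0 1) := by
  unfold gaussianPDFReal
  fun_prop

lemma Phi_key {s t : ℝ} (ht : 0 ≤ t) : 2 * Phi (-t) ≤ Phi (s - t) + Phi (-s - t) := by
  have main : ∀ s : ℝ, 0 ≤ s → 2 * Phi (-t) ≤ Phi (s - t) + Phi (-s - t) := by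
    intro s hs
    set f := gaussianPDFReal 0 1 with hf
    have h1 : Phi (s - t) - Phi (-t) = ∫ x in (-t)..(s - t), f x := Phi_sub_Phi _ _
    have h2 : Phi (-t) - Phi (-s - t) = ∫ x in (-s - t)..(-t), f x := Phi_sub_Phi _ _
    have h3 : (∫ x in (-s - t)..(-t), f x) = ∫ x in t..(s + t), f x := by
      rw [show (∫ x in t..(s+t), f x) = ∫ x in t..(s+t), f (-x) from by
        simp_rw [hf, gaussPDF_even], intervalIntegral.integral_comp_neg]
      congr 1
      ring
    have h4 : (∫ x in t..(s + t), f x) = ∫ x in (-t)..(s - t), f (x + 2*t) := by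
      rw [intervalIntegral.integral_comp_add_right]
      ring_nf
    have h5 : (0:ℝ) ≤ ∫ x in (-t)..(s - t), (f x - f (x + 2*t)) := by
      apply intervalIntegral.integral_nonneg (by linarith)
      intro x hx
      obtain ⟨hx1, hx2⟩ := hx
      simp only [hf, gaussianPDFReal, sub_nonneg]
      apply mul_le_mul_of_nonneg_left _ (by positivity)
      apply Real.exp_le_exp.2
      rw [div_le_div_iff_of_pos_right (by norm_num)]
      nlinarith
    have h6 : (∫ x in (-t)..(s - t), (f x - f (x + 2*t)))
        = (∫ x in (-t)..(s - t), f x) - ∫ x in (-t)..(s - t), f (x + 2*t) :=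
      intervalIntegral.integral_sub (gaussPDF_cont.intervalIntegrable _ _)
        ((by exact gaussPDF_cont.comp (continuous_id.add continuous_const) :
          Continuous fun x : ℝ => f (x + 2*t)).intervalIntegrable _ _)
    linarith
  rcases le_or_gt 0 s with hs | hs
  · exact main s hs
  · have := main (-s) (by linarith)
    rw [neg_neg] at this
    linarith

lemma gaussReal_affine (M : ℝ) (V : ℝ≥0) :
    gaussianReal M V = ((gaussianReal 0 1).map ((Real.sqrt V) * ·)).map (· + M) := by
  rw [gaussianReal_map_const_mul, gaussianReal_map_add_const]
  norm_num

lemma gaussReal_Ici_toReal (M : ℝ) (V : ℝ≥0) (hV : V ≠ 0) (c : ℝ) :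
    (gaussianReal M V (Set.Ici c)).toReal = Phi ((M - c) / Real.sqrt V) := by
  have hr : (0:ℝ) < Real.sqrt V := Real.sqrt_pos.2 (lt_of_le_of_ne V.coe_nonneg
    (by exact_mod_cast hV.symm))
  have hms : MeasurableSet ((· + M) ⁻¹' Set.Ici c) :=
    measurableSet_Ici.preimage (by fun_prop)
  rw [gaussReal_affine M V,
    Measure.map_apply (by fun_prop : Measurable fun x : ℝ => x + M) measurableSet_Ici,
    Measure.map_apply (by fun_prop : Measurable fun x : ℝ => Real.sqrt V * x) hms]
  have hpre : ((Real.sqrt V * ·) ⁻¹' ((· + M) ⁻¹' Set.Ici c)) = Set.Ici ((c - M) / Real.sqrt V) := by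
    ext x
    simp only [Set.mem_preimage, Set.mem_Ici]
    rw [div_le_iff₀ hr]
    constructor <;> intro h <;> nlinarith
  rw [hpre, gauss01_Ici]
  congr 1
  ring

lemma gaussReal_Iic_toReal (M : ℝ) (V : ℝ≥0) (hV : V ≠ 0) (c : ℝ) :
    (gaussianReal M V (Set.Iic c)).toReal = Phi ((c - M) / Real.sqrt V) := by
  have hr : (0:ℝ) < Real.sqrt V := Real.sqrt_pos.2 (lt_of_le_of_ne V.coe_nonneg
    (by exact_mod_cast hV.symm))
  have hms : MeasurableSet ((· + M) ⁻¹' Set.Iic c) :=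
    measurableSet_Iic.preimage (by fun_prop)
  rw [gaussReal_affine M V,
    Measure.map_apply (by fun_prop : Measurable fun x : ℝ => x + M) measurableSet_Iic,
    Measure.map_apply (by fun_prop : Measurable fun x : ℝ => Real.sqrt V * x) hms]
  have hpre : ((Real.sqrt V * ·) ⁻¹' ((· + M) ⁻¹' Set.Iic c)) = Set.Iic ((c - M) / Real.sqrt V) := by
    ext x
    simp only [Set.mem_preimage, Set.mem_Iic]
    rw [le_div_iff₀ hr]
    constructor <;> intro h <;> nlinarith
  rw [hpre, Phi]

lemma gaussN_halfspace (d : ℕ) {σ : ℝ} (hσ : 0 < σ) (m α : EuclideanSpace ℝ (Fin d))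
    (hα : α ≠ 0) (β : ℝ) :
    (gaussN d m ⟨σ ^ 2, sq_nonneg σ⟩ {x | 0 ≤ ⟪α, x⟫ + β}).toReal
      = Phi ((⟪α, m⟫ + β) / (σ * ‖α‖)) ∧
    (gaussN d m ⟨σ ^ 2, sq_nonneg σ⟩ {x | ⟪α, x⟫ + β ≤ 0}).toReal
      = Phi (-(⟪α, m⟫ + β) / (σ * ‖α‖)) := by
  have hαn : (0:ℝ) < ‖α‖ := norm_pos_iff.2 hα
  set V : ℝ≥0 := NNReal.mk (σ ^ 2 * ‖α‖ ^ 2) (by positivity) with hVdef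
  have hnormsq : ‖α‖ ^ 2 = ∑ i, α i ^ 2 := by
    rw [EuclideanSpace.norm_eq, Real.sq_sqrt (Finset.sum_nonneg fun i _ => sq_nonneg _)]
    simp [Real.norm_eq_abs, sq_abs]
  have hV : (V : ℝ) = ∑ i, α i ^ 2 * ((⟨σ ^ 2, sq_nonneg σ⟩ : ℝ≥0) : ℝ) := by
    simp only [hVdef, NNReal.coe_mk, ← Finset.sum_mul, ← hnormsq]
    ring
  have hV0 : V ≠ 0 := by
    simp only [hVdef, ← NNReal.coe_ne_zero, NNReal.coe_mk]
    positivity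
  have hsqV : Real.sqrt V = σ * ‖α‖ := by
    rw [hVdef, NNReal.coe_mk, show σ ^ 2 * ‖α‖ ^ 2 = (σ * ‖α‖) ^ 2 by ring,
      Real.sqrt_sq (by positivity)]
  have hinner : ∀ x : EuclideanSpace ℝ (Fin d), ⟪α, x⟫ = ∑ i, α i * x i := by
    intro x
    rw [PiLp.inner_apply]
    exact Finset.sum_congr rfl fun i _ => by simp [mul_comm]
  have hcoord : ∀ (y : Fin d → ℝ) (i : Fin d),
      ((MeasurableEquiv.toLp 2 (Fin d → ℝ)) y) i = y i := fun y i => rfl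
  have hinnm : ⟪α, m⟫ = ∑ i, α i * m i := hinner m
  have hmL : Measurable (fun y : Fin d → ℝ => ∑ i, α i * y i) :=
    Finset.univ.measurable_sum fun i _ => (measurable_pi_apply i).const_mul _
  have hmap := map_sum_pi_gaussian d (fun i => m i) (fun _ => ⟨σ ^ 2, sq_nonneg σ⟩)
    (fun i => α i) V hV
  constructor
  · unfold gaussN; rw [MeasurableEquiv.map_apply]
    have hset : ((MeasurableEquiv.toLp 2 (Fin d → ℝ)) ⁻¹'
        {x | 0 ≤ ⟪α, x⟫ + β}) = (fun y : Fin d → ℝ => ∑ i, α i * y i) ⁻¹' Set.Ici (-β) := by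
      ext y
      simp only [Set.mem_preimage, Set.mem_setOf_eq, Set.mem_Ici, hinner]
      simp only [hcoord]
      constructor <;> intro h <;> linarith
    rw [hset, ← Measure.map_apply hmL measurableSet_Ici, hmap, gaussReal_Ici_toReal _ _ hV0,
      hsqV, hinnm]
    ring_nf
  · unfold gaussN; rw [MeasurableEquiv.map_apply]
    have hset : ((MeasurableEquiv.toLp 2 (Fin d → ℝ)) ⁻¹'
        {x | ⟪α, x⟫ + β ≤ 0}) = (fun y : Fin d → ℝ => ∑ i, α i * y i) ⁻¹' Set.Iic (-β) := by
      ext y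
      simp only [Set.mem_preimage, Set.mem_setOf_eq, Set.mem_Iic, hinner]
      simp only [hcoord]
      constructor <;> intro h <;> linarith
    rw [hset, ← Measure.map_apply hmL measurableSet_Iic, hmap, gaussReal_Iic_toReal _ _ hV0,
      hsqV, hinnm]
    ring_nf

end Aux

/-- For class means within Wasserstein radius `ε` of `∓μ` (for Gaussians with
common covariance `σ²I_d`, that is `‖m₋ − (−μ)‖ ≤ ε`, `‖m₊ − μ‖ ≤ ε`), the maximin over means
/ minimax over affine classifiers of the misclassification error coincide, equal
`Φ(−(‖μ‖−ε)/σ) = Err(−(1−ε/‖μ‖)μ, (1−ε/‖μ‖)μ; μ, 0)`, and are attained at the shifted means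
`±(1−ε/‖μ‖)μ` with the classifier `(α,β) = (μ,0)` (saddle-point conditions). -/
theorem stmt8 (d : ℕ) (hd : 1 ≤ d) (σ : ℝ) (hσ : 0 < σ)
    (μ : EuclideanSpace ℝ (Fin d)) (hμ : μ ≠ 0) (ε : ℝ) (hε : 0 ≤ ε) (hε' : ε < ‖μ‖)
    (Err : EuclideanSpace ℝ (Fin d) → EuclideanSpace ℝ (Fin d) →
      EuclideanSpace ℝ (Fin d) → ℝ → ℝ)
    (hErr : ∀ mm mp α β, Err mm mp α β =
      1 / 2 * (gaussN d mm ⟨σ ^ 2, sq_nonneg σ⟩ {x | 0 ≤ ⟪α, x⟫ + β}).toReal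
      + 1 / 2 * (gaussN d mp ⟨σ ^ 2, sq_nonneg σ⟩ {x | ⟪α, x⟫ + β ≤ 0}).toReal) :
    (⨆ p : {p : EuclideanSpace ℝ (Fin d) × EuclideanSpace ℝ (Fin d) //
        ‖p.1 - (-μ)‖ ≤ ε ∧ ‖p.2 - μ‖ ≤ ε},
      ⨅ q : {q : EuclideanSpace ℝ (Fin d) × ℝ // q.1 ≠ 0},
        Err p.1.1 p.1.2 q.1.1 q.1.2)
      = (⨅ q : {q : EuclideanSpace ℝ (Fin d) × ℝ // q.1 ≠ 0},
          ⨆ p : {p : EuclideanSpace ℝ (Fin d) × EuclideanSpace ℝ (Fin d) //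
            ‖p.1 - (-μ)‖ ≤ ε ∧ ‖p.2 - μ‖ ≤ ε},
            Err p.1.1 p.1.2 q.1.1 q.1.2) ∧
    (⨆ p : {p : EuclideanSpace ℝ (Fin d) × EuclideanSpace ℝ (Fin d) //
        ‖p.1 - (-μ)‖ ≤ ε ∧ ‖p.2 - μ‖ ≤ ε},
      ⨅ q : {q : EuclideanSpace ℝ (Fin d) × ℝ // q.1 ≠ 0},
        Err p.1.1 p.1.2 q.1.1 q.1.2)
      = Phi (-(‖μ‖ - ε) / σ) ∧
    Phi (-(‖μ‖ - ε) / σ)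
      = Err (-((1 - ε / ‖μ‖) • μ)) ((1 - ε / ‖μ‖) • μ) μ 0 ∧
    (∀ mm mp : EuclideanSpace ℝ (Fin d), ‖mm - (-μ)‖ ≤ ε → ‖mp - μ‖ ≤ ε →
      Err mm mp μ 0 ≤ Phi (-(‖μ‖ - ε) / σ)) ∧
    (∀ α : EuclideanSpace ℝ (Fin d), α ≠ 0 → ∀ β : ℝ,
      Phi (-(‖μ‖ - ε) / σ) ≤ Err (-((1 - ε / ‖μ‖) • μ)) ((1 - ε / ‖μ‖) • μ) α β) := by
  have hμn : (0:ℝ) < ‖μ‖ := lt_of_le_of_lt hε hε'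
  set c : ℝ := 1 - ε / ‖μ‖ with hcdef
  have hc0 : 0 < c := by
    rw [hcdef, sub_pos, div_lt_one hμn]; exact hε'
  have hc1 : c ≤ 1 := by
    rw [hcdef]; have : 0 ≤ ε / ‖μ‖ := by positivity
    linarith
  have hcμ : c * ‖μ‖ = ‖μ‖ - ε := by
    rw [hcdef]; field_simp
  set v : ℝ := Phi (-(‖μ‖ - ε) / σ) with hvdef
  -- derived formula for Err
  have hE : ∀ (mm mp α : EuclideanSpace ℝ (Fin d)) (β : ℝ), α ≠ 0 → Err mm mp α β
      = 1/2 * Phi ((⟪α, mm⟫ + β) / (σ * ‖α‖)) + 1/2 * Phi (-(⟪α, mp⟫ + β) / (σ * ‖α‖)) := by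
    intro mm mp α β hα
    rw [hErr, (gaussN_halfspace d hσ mm α hα β).1, (gaussN_halfspace d hσ mp α hα β).2]
  -- bounds
  have hE01 : ∀ (mm mp α : EuclideanSpace ℝ (Fin d)) (β : ℝ), α ≠ 0 →
      0 ≤ Err mm mp α β ∧ Err mm mp α β ≤ 1 := by
    intro mm mp α β hα
    rw [hE mm mp α β hα]
    constructor
    · have := Phi_nonneg ((⟪α, mm⟫ + β) / (σ * ‖α‖))
      have := Phi_nonneg (-(⟪α, mp⟫ + β) / (σ * ‖α‖))
      linarith
    · have := Phi_le_one ((⟪α, mm⟫ + β) / (σ * ‖α‖))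
      have := Phi_le_one (-(⟪α, mp⟫ + β) / (σ * ‖α‖))
      linarith
  -- inner product computations at saddle means
  have hinner_c : ⟪μ, c • μ⟫ = c * ‖μ‖ ^ 2 := by
    rw [real_inner_smul_right, real_inner_self_eq_norm_sq]
  have hinner_nc : ⟪μ, -(c • μ)⟫ = -(c * ‖μ‖ ^ 2) := by
    rw [inner_neg_right, hinner_c]
  -- conjunct 3
  have conj3 : v = Err (-(c • μ)) (c • μ) μ 0 := by
    rw [hE _ _ _ _ hμ, hinner_nc, hinner_c]
    have harg : (-(c * ‖μ‖ ^ 2) + 0) / (σ * ‖μ‖) = -(‖μ‖ - ε) / σ := by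
      rw [← hcμ]; field_simp; ring
    have harg2 : -(c * ‖μ‖ ^ 2 + 0) / (σ * ‖μ‖) = -(‖μ‖ - ε) / σ := by
      rw [← hcμ]; field_simp; ring
    rw [harg, harg2, hvdef]
    ring
  -- conjunct 4
  have conj4 : ∀ mm mp : EuclideanSpace ℝ (Fin d), ‖mm - (-μ)‖ ≤ ε → ‖mp - μ‖ ≤ ε →
      Err mm mp μ 0 ≤ v := by
    intro mm mp hmm hmp
    rw [hE _ _ _ _ hμ]
    have hb1 : ⟪μ, mm⟫ ≤ ‖μ‖ * ε - ‖μ‖ ^ 2 := by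
      have h1 : ⟪μ, mm + μ⟫ ≤ ‖μ‖ * ε := by
        calc ⟪μ, mm + μ⟫ ≤ ‖μ‖ * ‖mm + μ‖ := real_inner_le_norm _ _
          _ ≤ ‖μ‖ * ε := by
            apply mul_le_mul_of_nonneg_left _ (norm_nonneg μ)
            rwa [← sub_neg_eq_add]
      have h2 : ⟪μ, mm + μ⟫ = ⟪μ, mm⟫ + ‖μ‖ ^ 2 := by
        rw [inner_add_right, real_inner_self_eq_norm_sq]
      linarith
    have hb2 : ‖μ‖ ^ 2 - ‖μ‖ * ε ≤ ⟪μ, mp⟫ := by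
      have h1 : -(‖μ‖ * ε) ≤ ⟪μ, mp - μ⟫ := by
        have := abs_real_inner_le_norm μ (mp - μ)
        have h2 : ‖μ‖ * ‖mp - μ‖ ≤ ‖μ‖ * ε :=
          mul_le_mul_of_nonneg_left hmp (norm_nonneg μ)
        have := neg_abs_le ⟪μ, mp - μ⟫
        linarith
      have h2 : ⟪μ, mp - μ⟫ = ⟪μ, mp⟫ - ‖μ‖ ^ 2 := by
        rw [inner_sub_right, real_inner_self_eq_norm_sq]
      linarith
    have hden : (0:ℝ) < σ * ‖μ‖ := by positivity
    have hkey : -(‖μ‖ - ε) / σ = (‖μ‖ * ε - ‖μ‖ ^ 2) / (σ * ‖μ‖) := by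
      field_simp; ring
    have harg1 : (⟪μ, mm⟫ + 0) / (σ * ‖μ‖) ≤ -(‖μ‖ - ε) / σ := by
      rw [hkey, add_zero]
      exact div_le_div_of_nonneg_right hb1 hden.le
    have harg2 : -(⟪μ, mp⟫ + 0) / (σ * ‖μ‖) ≤ -(‖μ‖ - ε) / σ := by
      rw [hkey, add_zero]
      exact div_le_div_of_nonneg_right (by linarith) hden.le
    have p1 := Phi_mono harg1
    have p2 := Phi_mono harg2
    rw [hvdef]
    linarith
  -- conjunct 5
  have conj5 : ∀ α : EuclideanSpace ℝ (Fin d), α ≠ 0 → ∀ β : ℝ,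
      v ≤ Err (-(c • μ)) (c • μ) α β := by
    intro α hα β
    rw [hE _ _ _ _ hα]
    have hαn : (0:ℝ) < ‖α‖ := norm_pos_iff.2 hα
    have hinner_cα : ⟪α, c • μ⟫ = c * ⟪α, μ⟫ := real_inner_smul_right _ _ _
    have hinner_ncα : ⟪α, -(c • μ)⟫ = -(c * ⟪α, μ⟫) := by rw [inner_neg_right, hinner_cα]
    set r : ℝ := σ * ‖α‖ with hrdef
    have hr0 : (0:ℝ) < r := by rw [hrdef]; positivity
    set t : ℝ := c * ⟪α, μ⟫ / r with htdef
    set s : ℝ := β / r with hsdef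
    have harg1 : (⟪α, -(c • μ)⟫ + β) / r = s - t := by
      rw [hinner_ncα, hsdef, htdef]; field_simp; ring
    have harg2 : -(⟪α, c • μ⟫ + β) / r = -s - t := by
      rw [hinner_cα, hsdef, htdef]; field_simp; ring
    rw [harg1, harg2]
    have hCS : |⟪α, μ⟫| ≤ ‖α‖ * ‖μ‖ := abs_real_inner_le_norm α μ
    have htb : |t| ≤ (‖μ‖ - ε) / σ := by
      rw [htdef, abs_div, abs_of_pos hr0, div_le_div_iff₀ hr0 hσ, abs_mul, abs_of_pos hc0,
        hrdef]
      have h1 : c * |⟪α, μ⟫| ≤ c * (‖α‖ * ‖μ‖) :=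
        mul_le_mul_of_nonneg_left hCS hc0.le
      have h2 : c * (‖α‖ * ‖μ‖) = (‖μ‖ - ε) * ‖α‖ := by rw [← hcμ]; ring
      nlinarith
    have hVle : v ≤ Phi (-|t|) := by
      rw [hvdef]
      apply Phi_mono
      have : -(‖μ‖ - ε) / σ ≤ -|t| := by
        rw [neg_div, neg_le_neg_iff]
        exact htb
      exact this
    rcases le_or_gt 0 t with ht | ht
    · have hk := Phi_key (s := s) ht
      rw [abs_of_nonneg ht] at hVle
      linarith
    · have h1 : Phi (s + t) = 1 - Phi (-s - t) := by
        rw [show s + t = -(-s - t) by ring, Phi_neg]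
      have h2 : Phi (s + t) ≤ Phi (s - t) := Phi_mono (by linarith)
      have h3 : Phi (-|t|) ≤ Phi 0 := Phi_mono (neg_nonpos.2 (abs_nonneg t))
      rw [Phi_zero] at h3
      linarith
  -- the saddle points
  have hnorm1 : ‖-(c • μ) - (-μ)‖ ≤ ε := by
    have he1 : -(c • μ) - (-μ) = (1 - c) • μ := by
      module
    rw [he1, norm_smul, Real.norm_eq_abs, hcdef]
    rw [show (1 : ℝ) - (1 - ε / ‖μ‖) = ε / ‖μ‖ by ring, abs_of_nonneg (by positivity)]
    rw [div_mul_cancel₀ _ (ne_of_gt hμn)]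
  have hnorm2 : ‖(c • μ) - μ‖ ≤ ε := by
    have he2 : (c • μ) - μ = (c - 1) • μ := by
      module
    rw [he2, norm_smul, Real.norm_eq_abs, hcdef]
    rw [show (1 : ℝ) - ε / ‖μ‖ - 1 = -(ε / ‖μ‖) by ring, abs_neg,
      abs_of_nonneg (by positivity), div_mul_cancel₀ _ (ne_of_gt hμn)]
  set K := {p : EuclideanSpace ℝ (Fin d) × EuclideanSpace ℝ (Fin d) //
    ‖p.1 - (-μ)‖ ≤ ε ∧ ‖p.2 - μ‖ ≤ ε} with hK
  set Q := {q : EuclideanSpace ℝ (Fin d) × ℝ // q.1 ≠ 0} with hQ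
  set F : K → Q → ℝ := fun p q => Err p.1.1 p.1.2 q.1.1 q.1.2 with hF
  haveI : Nonempty K := ⟨⟨(-(c • μ), c • μ), hnorm1, hnorm2⟩⟩
  haveI : Nonempty Q := ⟨⟨(μ, 0), hμ⟩⟩
  have hF01 : ∀ (p : K) (q : Q), 0 ≤ F p q ∧ F p q ≤ 1 :=
    fun p q => hE01 p.1.1 p.1.2 q.1.1 q.1.2 q.2
  have hBddAbove : ∀ q : Q, BddAbove (Set.range fun p : K => F p q) := by
    intro q
    exact ⟨1, by rintro x ⟨p, rfl⟩; exact (hF01 p q).2⟩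
  have hBddBelow : ∀ p : K, BddBelow (Set.range fun q : Q => F p q) := by
    intro p
    exact ⟨0, by rintro x ⟨q, rfl⟩; exact (hF01 p q).1⟩
  have hBddAbove2 : BddAbove (Set.range fun p : K => ⨅ q : Q, F p q) := by
    refine ⟨1, ?_⟩
    rintro x ⟨p, rfl⟩
    exact (ciInf_le (hBddBelow p) ⟨(μ, 0), hμ⟩).trans (hF01 p ⟨(μ, 0), hμ⟩).2
  have hBddBelow2 : BddBelow (Set.range fun q : Q => ⨆ p : K, F p q) := by
    refine ⟨0, ?_⟩
    rintro x ⟨q, rfl⟩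
    exact (hF01 ⟨(-(c • μ), c • μ), hnorm1, hnorm2⟩ q).1.trans
      (le_ciSup (hBddAbove q) ⟨(-(c • μ), c • μ), hnorm1, hnorm2⟩)
  have hVleA : v ≤ ⨆ p : K, ⨅ q : Q, F p q := by
    have h1 : v ≤ ⨅ q : Q, F ⟨(-(c • μ), c • μ), hnorm1, hnorm2⟩ q :=
      le_ciInf (fun q => conj5 q.1.1 q.2 q.1.2)
    exact h1.trans (le_ciSup hBddAbove2 ⟨(-(c • μ), c • μ), hnorm1, hnorm2⟩)
  have hBleV : (⨅ q : Q, ⨆ p : K, F p q) ≤ v := by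
    refine (ciInf_le hBddBelow2 ⟨(μ, 0), hμ⟩).trans ?_
    exact ciSup_le (fun p => conj4 p.1.1 p.1.2 p.2.1 p.2.2)
  have hAleB : (⨆ p : K, ⨅ q : Q, F p q) ≤ ⨅ q : Q, ⨆ p : K, F p q := by
    refine ciSup_le (fun p => le_ciInf (fun q => ?_))
    exact (ciInf_le (hBddBelow p) q).trans (le_ciSup (hBddAbove q) p)
  exact ⟨le_antisymm hAleB (hBleV.trans hVleA),
    le_antisymm (hAleB.trans hBleV) hVleA, conj3, conj4, conj5⟩
end

section
/- Let d ≥ 1, μ ∈ ℝ^d, σ > 0, ε ≥ 0 and θ ∈ ℝ^d with θ ≠ 0. The ℓ∞-robust classification error with radius ε of the linear classifier f_θ(x) = sign(⟨θ,x⟩) for the conditional Gaussian model with mean μ and variance σ², namely PE^{∞,ε}(θ) = ½·N(μ, σ²I_d)({x : ∃δ, ‖δ‖_∞ ≤ ε and ⟨θ, x+δ⟩ ≤ 0}) + ½·N(−μ, σ²I_d)({x : ∃δ, ‖δ‖_∞ ≤ ε and ⟨θ, x+δ⟩ ≥ 0}), equals Φ((ε·‖θ‖₁ − ⟨θ, μ⟩)/(σ·‖θ‖₂)).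 -/
open MeasureTheory ProbabilityTheory Real
open scoped RealInnerProductSpace NNReal

/-- The `ℓ¹` norm `‖x‖₁ = Σᵢ |xᵢ|` on `ℝ^d`. -/
noncomputable def l1norm {d : ℕ} (x : EuclideanSpace ℝ (Fin d)) : ℝ := ∑ i, |x i|

/-- The `ℓ∞` norm `‖x‖_∞ = maxᵢ |xᵢ|` on `ℝ^d`. -/
noncomputable def linfnorm {d : ℕ} (x : EuclideanSpace ℝ (Fin d)) : ℝ := ⨆ i, |x i|



lemma pdf_conv_pointwise (a b y x : ℝ) (s t : ℝ≥0) (hs : s ≠ 0) (ht : t ≠ 0) :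
    gaussianPDFReal a s x * gaussianPDFReal b t (y - x)
      = gaussianPDFReal (a+b) (s+t) y
        * gaussianPDFReal (a + s*(y-a-b)/(s+t)) (s*t/(s+t)) x := by
  have hs' : (0:ℝ) < s := lt_of_le_of_ne s.coe_nonneg (by exact_mod_cast (Ne.symm hs))
  have ht' : (0:ℝ) < t := lt_of_le_of_ne t.coe_nonneg (by exact_mod_cast (Ne.symm ht))
  have hst : (0:ℝ) < (s:ℝ) + t := by linarith
  have hu : ((s*t/(s+t) : ℝ≥0) : ℝ) = (s:ℝ)*t/((s:ℝ)+t) := by push_cast; ring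
  simp only [gaussianPDFReal, NNReal.coe_add, hu]
  have hC : (√(2 * π * s))⁻¹ * (√(2 * π * t))⁻¹
      = (√(2 * π * ((s:ℝ) + t)))⁻¹ * (√(2 * π * ((s:ℝ)*t/((s:ℝ)+t))))⁻¹ := by
    rw [← mul_inv, ← mul_inv, ← Real.sqrt_mul (by positivity), ← Real.sqrt_mul (by positivity)]
    congr 1
    field_simp
  have hE : rexp (-(x - a)^2 / (2*s)) * rexp (-(y - x - b)^2 / (2*t))
      = rexp (-(y - (a+b))^2 / (2*((s:ℝ)+t)))
        * rexp (-(x - (a + (s:ℝ)*(y-a-b)/((s:ℝ)+t)))^2 / (2*((s:ℝ)*t/((s:ℝ)+t)))) := by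
    rw [← Real.exp_add, ← Real.exp_add]
    congr 1
    field_simp
    ring
  rw [mul_mul_mul_comm, hC, hE, ← mul_mul_mul_comm]

lemma lintegral_pdf_conv (a b y : ℝ) (s t : ℝ≥0) (hs : s ≠ 0) (ht : t ≠ 0) :
    ∫⁻ x, gaussianPDF a s x * gaussianPDF b t (y - x) = gaussianPDF (a+b) (s+t) y := by
  have hu : s*t/(s+t) ≠ 0 := by
    simp [div_eq_zero_iff, mul_eq_zero, hs, ht, add_eq_zero]
  calc ∫⁻ x, gaussianPDF a s x * gaussianPDF b t (y - x)
      = ∫⁻ x, ENNReal.ofReal (gaussianPDFReal a s x * gaussianPDFReal b t (y - x)) := by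
        simp_rw [gaussianPDF, ENNReal.ofReal_mul (gaussianPDFReal_nonneg a s _)]
    _ = ∫⁻ x, ENNReal.ofReal (gaussianPDFReal (a+b) (s+t) y)
          * gaussianPDF (a + s*(y-a-b)/(s+t)) (s*t/(s+t)) x := by
        simp_rw [fun x => pdf_conv_pointwise a b y x s t hs ht,
          ENNReal.ofReal_mul (gaussianPDFReal_nonneg (a+b) (s+t) y), gaussianPDF]
    _ = ENNReal.ofReal (gaussianPDFReal (a+b) (s+t) y)
          * ∫⁻ x, gaussianPDF (a + s*(y-a-b)/(s+t)) (s*t/(s+t)) x := by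
        rw [lintegral_const_mul _ (measurable_gaussianPDF _ _)]
    _ = gaussianPDF (a+b) (s+t) y := by
        rw [lintegral_gaussianPDF_eq_one _ hu, mul_one]; rfl

lemma gaussianReal_prod_add (a b : ℝ) (s t : ℝ≥0) :
    ((gaussianReal a s).prod (gaussianReal b t)).map (fun p : ℝ × ℝ => p.1 + p.2)
      = gaussianReal (a+b) (s+t) := by
  by_cases hs : s = 0
  · subst hs
    rw [gaussianReal_zero_var, Measure.dirac_prod,
      Measure.map_map measurable_add measurable_prodMk_left,
      show ((fun p : ℝ×ℝ => p.1+p.2) ∘ Prod.mk a) = (a + ·) from rfl,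
      gaussianReal_map_const_add, add_comm b a, zero_add]
  by_cases ht : t = 0
  · subst ht
    rw [gaussianReal_zero_var, Measure.prod_dirac,
      Measure.map_map measurable_add measurable_prodMk_right,
      show ((fun p : ℝ×ℝ => p.1+p.2) ∘ (fun x => (x, b))) = (· + b) from rfl,
      gaussianReal_map_add_const, add_zero]
  have hst : s + t ≠ 0 := by simp [add_eq_zero, hs]
  have hmul : Measurable (fun q : ℝ × ℝ => gaussianPDF a s q.1 * gaussianPDF b t (q.2 - q.1)) :=
    ((measurable_gaussianPDF a s).comp measurable_fst).mul
      ((measurable_gaussianPDF b t).comp (measurable_snd.sub measurable_fst))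
  have : IsProbabilityMeasure
      (((gaussianReal a s).prod (gaussianReal b t)).map (fun p : ℝ × ℝ => p.1 + p.2)) :=
    Measure.isProbabilityMeasure_map measurable_add.aemeasurable
  refine Measure.ext_of_Iic _ _ (fun c => ?_)
  rw [Measure.map_apply measurable_add measurableSet_Iic]
  have hpre : (fun p : ℝ × ℝ => p.1 + p.2) ⁻¹' Set.Iic c
      = {p : ℝ × ℝ | p.1 + p.2 ≤ c} := rfl
  rw [hpre, Measure.prod_apply (by
    exact measurableSet_le (measurable_fst.add measurable_snd) measurable_const)]
  have key : ∀ x : ℝ, gaussianReal b t (Prod.mk x ⁻¹' {p : ℝ × ℝ | p.1 + p.2 ≤ c})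
      = ∫⁻ y in Set.Iic c, gaussianPDF b t (y - x) := by
    intro x
    have hpre2 : Prod.mk x ⁻¹' {p : ℝ × ℝ | p.1 + p.2 ≤ c} = Set.Iic (c - x) := by
      ext y; simp [Set.mem_Iic, le_sub_iff_add_le, add_comm]
    rw [hpre2, gaussianReal_apply _ ht,
      ← lintegral_indicator measurableSet_Iic _, ← lintegral_indicator measurableSet_Iic _]
    have hpt : ∀ y : ℝ, (Set.Iic (c - x)).indicator (gaussianPDF b t) y
        = (Set.Iic c).indicator (fun z => gaussianPDF b t (z - x)) (y + x) := by
      intro y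
      simp only [Set.indicator_apply, Set.mem_Iic, le_sub_iff_add_le, add_sub_cancel_right]
    simp_rw [hpt]
    exact lintegral_add_right_eq_self _ x
  simp_rw [key]
  rw [gaussianReal_of_var_ne_zero a hs,
    lintegral_withDensity_eq_lintegral_mul _ (measurable_gaussianPDF a s)
      (Measurable.lintegral_prod_right (f := fun x y => gaussianPDF b t (y - x)) (by
        exact (measurable_gaussianPDF b t).comp (measurable_snd.sub measurable_fst)))]
  simp only [Pi.mul_apply]
  calc ∫⁻ x, gaussianPDF a s x * ∫⁻ y in Set.Iic c, gaussianPDF b t (y - x)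
      = ∫⁻ x, ∫⁻ y in Set.Iic c, gaussianPDF a s x * gaussianPDF b t (y - x) := by
        congr 1; ext x; rw [lintegral_const_mul _ (by
          exact (measurable_gaussianPDF b t).comp (measurable_id.sub measurable_const))]
    _ = ∫⁻ y in Set.Iic c, ∫⁻ x, gaussianPDF a s x * gaussianPDF b t (y - x) := by
        exact lintegral_lintegral_swap (hmul.aemeasurable)
    _ = ∫⁻ y in Set.Iic c, gaussianPDF (a+b) (s+t) y := by
        congr 1; ext y; exact lintegral_pdf_conv a b y s t hs ht
    _ = gaussianReal (a+b) (s+t) (Set.Iic c) := (gaussianReal_apply _ hst _).symm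

lemma measurable_wsum {n : ℕ} (c : Fin n → ℝ) :
    Measurable (fun x : Fin n → ℝ => ∑ i, c i * x i) :=
  Finset.measurable_sum _ fun j _ => (measurable_pi_apply j).const_mul _

def nnsq (c : ℝ) : ℝ≥0 := ⟨c^2, sq_nonneg c⟩

lemma nnsq_eq (c : ℝ) : nnsq c = (⟨c^2, sq_nonneg c⟩ : ℝ≥0) := rfl

lemma pi_gauss_map_sum : ∀ (n : ℕ) (m c : Fin n → ℝ) (v : ℝ≥0),
    (Measure.pi fun i => gaussianReal (m i) v).map (fun x => ∑ i, c i * x i)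
      = gaussianReal (∑ i, c i * m i)
          ((∑ i, nnsq (c i)) * v) := by
  intro n
  induction n with
  | zero =>
      intro m c v
      simp only [Finset.univ_eq_empty, Finset.sum_empty, zero_mul]
      rw [Measure.map_const, measure_univ, one_smul, gaussianReal_zero_var]
  | succ n ih =>
      intro m c v
      have hmp := measurePreserving_piFinSuccAbove
        (fun i : Fin (n+1) => gaussianReal (m i) v) 0
      set T := MeasurableEquiv.piFinSuccAbove (fun _ : Fin (n+1) => ℝ) 0 with hT
      set g := fun p : ℝ × (Fin n → ℝ) => c 0 * p.1 + ∑ j, c (Fin.succ j) * p.2 j with hg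
      have hgm : Measurable g := (measurable_fst.const_mul _).add
        ((measurable_wsum (fun j => c (Fin.succ j))).comp measurable_snd)
      have hfg : (fun x : Fin (n+1) → ℝ => ∑ i, c i * x i) = g ∘ T := by
        funext x
        have hTx : T x = (x 0, fun j => x (Fin.succ j)) := by
          simp [hT, MeasurableEquiv.piFinSuccAbove]; rfl
        simp only [Function.comp_apply, hTx, hg, Fin.sum_univ_succ]
      rw [hfg, ← Measure.map_map hgm T.measurable, hmp.map_eq]
      have hsucc : (fun j : Fin n => gaussianReal (m ((0 : Fin (n+1)).succAbove j)) v)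
          = fun j : Fin n => gaussianReal (m (Fin.succ j)) v := by
        funext j; rw [Fin.zero_succAbove]
      rw [hsucc]
      have hgsplit : g = (fun q : ℝ × ℝ => q.1 + q.2) ∘
          (Prod.map (fun x : ℝ => c 0 * x) (fun x : Fin n → ℝ => ∑ j, c (Fin.succ j) * x j)) := by
        funext p; simp [hg]
      rw [hgsplit, ← Measure.map_map measurable_add
        (Measurable.prodMap (measurable_const_mul _) (measurable_wsum _)),
        ← Measure.map_prod_map _ _ (measurable_const_mul _) (measurable_wsum _),
        show (fun x : ℝ => c 0 * x) = (c 0 * ·) from rfl,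
        gaussianReal_map_const_mul, show (NNReal.mk (c 0 ^ 2) (sq_nonneg _) : ℝ≥0) = nnsq (c 0) from rfl, ih (fun j => m (Fin.succ j)) (fun j => c (Fin.succ j)) v,
        gaussianReal_prod_add, ← Fin.sum_univ_succ (f := fun i => c i * m i)]
      congr 1
      rw [← add_mul, ← Fin.sum_univ_succ (f := fun i => nnsq (c i))]






-- CDF lemma
lemma gauss_shift (M : ℝ) (v : ℝ≥0) (hv : v ≠ 0) :
    gaussianReal M v = ((gaussianReal 0 1).map (Real.sqrt v * ·)).map (· + M) := by
  rw [gaussianReal_map_const_mul, gaussianReal_map_add_const, mul_zero, zero_add]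
  congr 1
  rw [mul_one]
  ext
  exact (Real.sq_sqrt v.coe_nonneg).symm

lemma gauss_Iic (M : ℝ) (v : ℝ≥0) (hv : v ≠ 0) (c : ℝ) :
    (gaussianReal M v (Set.Iic c)).toReal = Phi ((c - M) / Real.sqrt v) := by
  have hsv : (0:ℝ) < Real.sqrt v := Real.sqrt_pos.mpr
    (lt_of_le_of_ne v.coe_nonneg (by exact_mod_cast (Ne.symm hv)))
  rw [gauss_shift M v hv, Measure.map_apply (measurable_add_const M) measurableSet_Iic,
    Measure.map_apply (measurable_const_mul _) (measurableSet_Iic.preimage (measurable_add_const M))]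
  have h1 : (· + M) ⁻¹' Set.Iic c = Set.Iic (c - M) := by
    ext y; simp [Set.mem_Iic, le_sub_iff_add_le]
  have h2 : (Real.sqrt v * ·) ⁻¹' Set.Iic (c - M) = Set.Iic ((c - M) / Real.sqrt v) := by
    ext y; simp [Set.mem_Iic, le_div_iff₀ hsv, mul_comm]
  rw [h1, h2, Phi]

lemma gauss_Ici (M : ℝ) (v : ℝ≥0) (c : ℝ) :
    gaussianReal M v (Set.Ici c) = gaussianReal (-M) v (Set.Iic (-c)) := by
  have : gaussianReal (-M) v = (gaussianReal M v).map ((-1 : ℝ) * ·) := by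
    rw [gaussianReal_map_const_mul]
    congr 1
    · ring
    · ext; simp
  rw [this, Measure.map_apply (measurable_const_mul _) measurableSet_Iic]
  congr 1
  ext y
  simp only [Set.mem_preimage, Set.mem_Iic, Set.mem_Ici, neg_one_mul, neg_le_neg_iff]

-- inner product formula
lemma inner_wsum {d : ℕ} (θ x : EuclideanSpace ℝ (Fin d)) : ⟪θ, x⟫ = ∑ i, θ i * x i := by
  simp [PiLp.inner_apply, RCLike.inner_apply, starRingEnd_apply]
  exact Finset.sum_congr rfl fun i _ => mul_comm _ _

-- set lemmas
lemma set_eq_le {d : ℕ} (hd : 1 ≤ d) (ε : ℝ) (hε : 0 ≤ ε) (θ : EuclideanSpace ℝ (Fin d)) :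
    {x : EuclideanSpace ℝ (Fin d) |
        ∃ δ : EuclideanSpace ℝ (Fin d), linfnorm δ ≤ ε ∧ ⟪θ, x + δ⟫ ≤ 0}
      = {x : EuclideanSpace ℝ (Fin d) | ⟪θ, x⟫ ≤ ε * l1norm θ} := by
  have : Nonempty (Fin d) := Fin.pos_iff_nonempty.mp hd
  ext x
  simp only [Set.mem_setOf_eq]
  constructor
  · rintro ⟨δ, hδ, hle⟩
    have habs : ∀ i, |δ i| ≤ ε := by
      intro i
      refine le_trans ?_ hδ
      rw [linfnorm]
      exact le_ciSup (f := fun j => |δ j|) (Set.Finite.bddAbove (Set.finite_range _)) i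
    have hbound : |⟪θ, δ⟫| ≤ ε * l1norm θ := by
      rw [inner_wsum, l1norm, Finset.mul_sum]
      refine le_trans (Finset.abs_sum_le_sum_abs _ _) (Finset.sum_le_sum fun i _ => ?_)
      rw [abs_mul, mul_comm ε]
      exact mul_le_mul_of_nonneg_left (habs i) (abs_nonneg _)
    have := inner_add_right (𝕜 := ℝ) θ x δ
    have h2 : ⟪θ, x⟫ ≤ -⟪θ, δ⟫ := by
      rw [inner_add_right] at hle; linarith
    linarith [neg_abs_le ⟪θ, δ⟫, abs_le.mp hbound]
  · intro hx
    refine ⟨(WithLp.toLp 2 (fun i => if θ i < 0 then ε else -ε : Fin d → ℝ) : EuclideanSpace ℝ (Fin d)), ?_, ?_⟩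
    · refine ciSup_le fun i => ?_
      by_cases h : θ i < 0 <;> simp [h, abs_of_nonneg hε, abs_neg]
    · have hinner : ⟪θ, (WithLp.toLp 2 (fun i => if θ i < 0 then ε else -ε : Fin d → ℝ) : EuclideanSpace ℝ (Fin d))⟫
          = -(ε * l1norm θ) := by
        rw [inner_wsum, l1norm, Finset.mul_sum, ← Finset.sum_neg_distrib]
        refine Finset.sum_congr rfl fun i _ => ?_
        by_cases h : θ i < 0
        · simp only [PiLp.toLp_apply, h, if_true]
          rw [abs_of_neg h]; ring
        · simp only [PiLp.toLp_apply, h, if_false]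
          rw [abs_of_nonneg (not_lt.mp h)]; ring
      rw [inner_add_right, hinner]
      linarith

lemma set_eq_ge {d : ℕ} (hd : 1 ≤ d) (ε : ℝ) (hε : 0 ≤ ε) (θ : EuclideanSpace ℝ (Fin d)) :
    {x : EuclideanSpace ℝ (Fin d) |
        ∃ δ : EuclideanSpace ℝ (Fin d), linfnorm δ ≤ ε ∧ 0 ≤ ⟪θ, x + δ⟫}
      = {x : EuclideanSpace ℝ (Fin d) | -(ε * l1norm θ) ≤ ⟪θ, x⟫} := by
  have : Nonempty (Fin d) := Fin.pos_iff_nonempty.mp hd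
  ext x
  simp only [Set.mem_setOf_eq]
  constructor
  · rintro ⟨δ, hδ, hle⟩
    have habs : ∀ i, |δ i| ≤ ε := by
      intro i
      refine le_trans ?_ hδ
      rw [linfnorm]
      exact le_ciSup (f := fun j => |δ j|) (Set.Finite.bddAbove (Set.finite_range _)) i
    have hbound : |⟪θ, δ⟫| ≤ ε * l1norm θ := by
      rw [inner_wsum, l1norm, Finset.mul_sum]
      refine le_trans (Finset.abs_sum_le_sum_abs _ _) (Finset.sum_le_sum fun i _ => ?_)
      rw [abs_mul, mul_comm ε]
      exact mul_le_mul_of_nonneg_left (habs i) (abs_nonneg _)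
    rw [inner_add_right] at hle
    linarith [le_abs_self ⟪θ, δ⟫, abs_le.mp hbound]
  · intro hx
    refine ⟨(WithLp.toLp 2 (fun i => if θ i < 0 then -ε else ε : Fin d → ℝ) : EuclideanSpace ℝ (Fin d)), ?_, ?_⟩
    · refine ciSup_le fun i => ?_
      by_cases h : θ i < 0 <;> simp [h, abs_of_nonneg hε, abs_neg]
    · have hinner : ⟪θ, (WithLp.toLp 2 (fun i => if θ i < 0 then -ε else ε : Fin d → ℝ) : EuclideanSpace ℝ (Fin d))⟫
          = ε * l1norm θ := by
        rw [inner_wsum, l1norm, Finset.mul_sum]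
        refine Finset.sum_congr rfl fun i _ => ?_
        by_cases h : θ i < 0
        · simp only [PiLp.toLp_apply, h, if_true]
          rw [abs_of_neg h]; ring
        · simp only [PiLp.toLp_apply, h, if_false]
          rw [abs_of_nonneg (not_lt.mp h)]; ring
      rw [inner_add_right, hinner]
      linarith


lemma gaussN_inner (d : ℕ) (m : EuclideanSpace ℝ (Fin d)) (v : ℝ≥0)
    (θ : EuclideanSpace ℝ (Fin d)) {S : Set ℝ} (hS : MeasurableSet S) :
    gaussN d m v {x | ⟪θ, x⟫ ∈ S}
      = gaussianReal (⟪θ, m⟫) ((∑ i, nnsq (θ i)) * v) S := by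
  rw [gaussN, MeasurableEquiv.map_apply]
  have hpre : (MeasurableEquiv.toLp 2 (Fin d → ℝ)) ⁻¹' {x | ⟪θ, x⟫ ∈ S}
      = (fun x : Fin d → ℝ => ∑ i, θ i * x i) ⁻¹' S := by
    ext x
    simp only [Set.mem_preimage, Set.mem_setOf_eq]
    rw [inner_wsum]
    rfl
  rw [hpre, ← Measure.map_apply (measurable_wsum θ) hS, pi_gauss_map_sum, inner_wsum]

/-- The `ℓ∞`-robust classification error with radius `ε` of
`f_θ(x) = sign(⟨θ,x⟩)` under the conditional Gaussian model `x|y ∼ N(yμ, σ²I_d)` equals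
`Φ((ε‖θ‖₁ − ⟨θ,μ⟩)/(σ‖θ‖₂))`. -/
theorem stmt11 (d : ℕ) (hd : 1 ≤ d) (μ : EuclideanSpace ℝ (Fin d)) (σ : ℝ) (hσ : 0 < σ)
    (ε : ℝ) (hε : 0 ≤ ε) (θ : EuclideanSpace ℝ (Fin d)) (hθ : θ ≠ 0) :
    1 / 2 * (gaussN d μ ⟨σ ^ 2, sq_nonneg σ⟩
        {x | ∃ δ : EuclideanSpace ℝ (Fin d), linfnorm δ ≤ ε ∧ ⟪θ, x + δ⟫ ≤ 0}).toReal
      + 1 / 2 * (gaussN d (-μ) ⟨σ ^ 2, sq_nonneg σ⟩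
          {x | ∃ δ : EuclideanSpace ℝ (Fin d), linfnorm δ ≤ ε ∧ 0 ≤ ⟪θ, x + δ⟫}).toReal
      = Phi ((ε * l1norm θ - ⟪θ, μ⟫) / (σ * ‖θ‖)) := by
  set V : ℝ≥0 := (∑ i, nnsq (θ i)) * nnsq σ with hVdef
  have hθ' : (0:ℝ) < ‖θ‖ := norm_pos_iff.mpr hθ
  have hsum : ((∑ i, nnsq (θ i) : ℝ≥0) : ℝ) = ∑ i, (θ i)^2 := by
    rw [NNReal.coe_sum]
    rfl
  have hnorm : ‖θ‖ = Real.sqrt (∑ i, (θ i)^2) := by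
    rw [EuclideanSpace.norm_eq]
    congr 1
    exact Finset.sum_congr rfl fun i _ => by rw [Real.norm_eq_abs, sq_abs]
  have hVcoe : ((V : ℝ≥0) : ℝ) = (∑ i, (θ i)^2) * σ^2 := by
    rw [hVdef, NNReal.coe_mul, hsum]; rfl
  have hV0 : V ≠ 0 := by
    intro h
    have hc : ((V : ℝ≥0) : ℝ) = 0 := by rw [h]; rfl
    rw [hVcoe] at hc
    have h1 : (0:ℝ) < ∑ i, (θ i)^2 := Real.sqrt_pos.mp (hnorm ▸ hθ')
    nlinarith [pow_pos hσ 2]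
  have hsqrtV : Real.sqrt V = σ * ‖θ‖ := by
    rw [hVcoe, Real.sqrt_mul (Finset.sum_nonneg fun i _ => sq_nonneg (θ i)),
      Real.sqrt_sq hσ.le, hnorm, mul_comm]
  have hσsq : (⟨σ ^ 2, sq_nonneg σ⟩ : ℝ≥0) = nnsq σ := rfl
  have hS1 : {x : EuclideanSpace ℝ (Fin d) | ⟪θ, x⟫ ≤ ε * l1norm θ}
      = {x : EuclideanSpace ℝ (Fin d) | ⟪θ, x⟫ ∈ Set.Iic (ε * l1norm θ)} := rfl
  have hS2 : {x : EuclideanSpace ℝ (Fin d) | -(ε * l1norm θ) ≤ ⟪θ, x⟫}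
      = {x : EuclideanSpace ℝ (Fin d) | ⟪θ, x⟫ ∈ Set.Ici (-(ε * l1norm θ))} := rfl
  rw [set_eq_le hd ε hε θ, set_eq_ge hd ε hε θ, hS1, hS2, hσsq,
    gaussN_inner d μ (nnsq σ) θ measurableSet_Iic,
    gaussN_inner d (-μ) (nnsq σ) θ measurableSet_Ici,
    show (⟪θ, -μ⟫ : ℝ) = -⟪θ, μ⟫ from inner_neg_right θ μ,
    gauss_Ici, neg_neg]
  rw [← hVdef]
  rw [gauss_Iic _ _ hV0]
  rw [gauss_Iic _ _ hV0]
  rw [hsqrtV]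
  ring
end

section
/- Let d ≥ 1, μ ∈ ℝ^d, σ > 0, ε ≥ 0 and θ₁, θ₂ ∈ ℝ^d with θ₁ ≠ 0 and θ₂ ≠ 0. If (⟨θ₁, μ⟩ − ε‖θ₁‖₁)/‖θ₁‖₂ ≥ (⟨θ₂, μ⟩ − ε‖θ₂‖₁)/‖θ₂‖₂, then PE^{∞,ε}(θ₁) ≤ PE^{∞,ε}(θ₂), where PE^{∞,ε}(θ) = ½·N(μ, σ²I_d)({x : ∃δ, ‖δ‖_∞ ≤ ε and ⟨θ, x+δ⟩ ≤ 0}) + ½·N(−μ, σ²I_d)({x : ∃δ, ‖δ‖_∞ ≤ ε and ⟨θ, x+δ⟩ ≥ 0}) is the ℓ∞-robust classification error with radius ε of the linear classifier f_θ(x) = sign(⟨θ,x⟩). -/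
open MeasureTheory ProbabilityTheory
open scoped RealInnerProductSpace NNReal

open scoped ENNReal


lemma lintegral_pi_prod : ∀ (n : ℕ) (μ : Fin n → Measure ℝ) (_ : ∀ i, SigmaFinite (μ i))
    (f : Fin n → ℝ → ℝ≥0∞) (_ : ∀ i, Measurable (f i)),
    ∫⁻ x, ∏ i, f i (x i) ∂(Measure.pi μ) = ∏ i, ∫⁻ y, f i y ∂(μ i) := by
  intro n
  induction n with
  | zero =>
    intro μ _ f _
    simp [Measure.pi_of_empty]
  | succ n ih =>
    intro μ hμ f hf
    have hmp := (measurePreserving_piFinSuccAbove μ 0).symm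
    rw [← hmp.map_eq, lintegral_map (by fun_prop)
      (MeasurableEquiv.piFinSuccAbove (fun _ => ℝ) 0).symm.measurable]
    have hsa : (0 : Fin (n+1)).succAbove = Fin.succ := Fin.succAbove_zero
    have key : ∀ p : ℝ × (Fin n → ℝ),
        (∏ i, f i (((MeasurableEquiv.piFinSuccAbove (fun _ => ℝ) 0).symm p) i))
          = f 0 p.1 * ∏ j : Fin n, f j.succ (p.2 j) := by
      intro p
      rw [Fin.prod_univ_succ]
      simp [MeasurableEquiv.piFinSuccAbove, hsa, Fin.insertNth_apply_same,
        Fin.insertNth_apply_succAbove]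
    simp_rw [key]
    rw [lintegral_prod _ (by fun_prop)]
    simp_rw [lintegral_const_mul _ (by fun_prop : Measurable fun b : Fin n → ℝ => ∏ j, f j.succ (b j)),
      lintegral_mul_const _ (hf 0)]
    simp_rw [hsa]
    rw [ih _ (fun j => inferInstance) _ (fun j => hf _), Fin.prod_univ_succ]

lemma pi_withDensity (n : ℕ) (f : Fin n → ℝ → ℝ≥0∞) (hf : ∀ i, Measurable (f i))
    [∀ i, SigmaFinite ((volume : Measure ℝ).withDensity (f i))] :
    Measure.pi (fun i => (volume : Measure ℝ).withDensity (f i)) =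
      (volume : Measure (Fin n → ℝ)).withDensity (fun x => ∏ i, f i (x i)) := by
  refine (Measure.pi_eq fun s hs => ?_)
  rw [withDensity_apply _ (MeasurableSet.univ_pi hs),
    ← lintegral_indicator (MeasurableSet.univ_pi hs)]
  have key : ∀ x : Fin n → ℝ, (Set.pi Set.univ s).indicator (fun x => ∏ i, f i (x i)) x
      = ∏ i, (s i).indicator (f i) (x i) := by
    intro x
    by_cases hx : x ∈ Set.pi Set.univ s
    · rw [Set.indicator_of_mem hx]
      exact Finset.prod_congr rfl fun i _ =>
        (Set.indicator_of_mem (hx i (Set.mem_univ i)) _).symm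
    · rw [Set.indicator_of_notMem hx]
      rw [Set.mem_univ_pi] at hx
      push_neg at hx
      obtain ⟨i, hi⟩ := hx
      exact (Finset.prod_eq_zero (Finset.mem_univ i)
        (Set.indicator_of_notMem hi _)).symm
  simp_rw [key]
  rw [show (volume : Measure (Fin n → ℝ)) = Measure.pi (fun _ => volume) from rfl,
    lintegral_pi_prod n _ (fun i => inferInstance) _
      (fun i => (hf i).indicator (hs i))]
  exact Finset.prod_congr rfl fun i _ => by
    rw [withDensity_apply _ (hs i), ← lintegral_indicator (hs i)]

lemma map_withDensity_equiv {α β : Type*} [MeasurableSpace α] [MeasurableSpace β]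
    (e : α ≃ᵐ β) (μ : Measure α) (f : β → ℝ≥0∞) (hf : Measurable f) :
    (μ.withDensity (fun x => f (e x))).map e = (μ.map e).withDensity f := by
  ext s hs
  rw [Measure.map_apply e.measurable hs, withDensity_apply _ hs,
    withDensity_apply _ (e.measurable hs),
    MeasureTheory.setLIntegral_map hs hf e.measurable]

open Real in
noncomputable def gphi (d : ℕ) (v : ℝ≥0) (t : ℝ) : ℝ≥0∞ :=
  ENNReal.ofReal ((√(2 * π * v))⁻¹ ^ d * rexp (-t / (2 * v)))

open Real in
lemma prod_gaussianPDF (d : ℕ) (m : EuclideanSpace ℝ (Fin d)) (v : ℝ≥0)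
    (x : EuclideanSpace ℝ (Fin d)) :
    ∏ i, gaussianPDF (m i) v (x i) = gphi d v (‖x - m‖ ^ 2) := by
  have hnorm : ‖x - m‖ ^ 2 = ∑ i, (x i - m i) ^ 2 := by
    rw [EuclideanSpace.norm_eq, Real.sq_sqrt (by positivity)]
    refine Finset.sum_congr rfl fun i _ => ?_
    rw [Real.norm_eq_abs, sq_abs]
    rfl
  rw [hnorm]
  simp only [gaussianPDF_def]
  simp only [gphi]
  rw [← ENNReal.ofReal_prod_of_nonneg (fun i _ => gaussianPDFReal_nonneg _ _ _)]
  congr 1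
  simp_rw [gaussianPDFReal_def]
  rw [Finset.prod_mul_distrib, Finset.prod_const, ← Real.exp_sum]
  congr 2
  · simp
  · rw [← Finset.sum_div, ← Finset.sum_neg_distrib]

lemma gaussN_eq_withDensity (d : ℕ) (m : EuclideanSpace ℝ (Fin d)) {v : ℝ≥0} (hv : v ≠ 0) :
    gaussN d m v = (volume : Measure (EuclideanSpace ℝ (Fin d))).withDensity
      (fun x => gphi d v (‖x - m‖ ^ 2)) := by
  haveI : ∀ i : Fin d, SigmaFinite ((volume : Measure ℝ).withDensity (gaussianPDF (m i) v)) := by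
    intro i
    rw [← gaussianReal_of_var_ne_zero _ hv]
    infer_instance
  rw [gaussN]
  simp_rw [gaussianReal_of_var_ne_zero _ hv]
  rw [pi_withDensity d _ (fun i => measurable_gaussianPDF _ v)]
  have : (fun y : Fin d → ℝ => ∏ i, gaussianPDF (m i) v (y i))
      = (fun x : EuclideanSpace ℝ (Fin d) => gphi d v (‖x - m‖ ^ 2)) ∘
        (MeasurableEquiv.toLp 2 (Fin d → ℝ)) := by
    funext y
    exact prod_gaussianPDF d m v ((MeasurableEquiv.toLp 2 (Fin d → ℝ)) y)
  rw [this]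
  rw [show ((fun x : EuclideanSpace ℝ (Fin d) => gphi d v (‖x - m‖ ^ 2)) ∘
        (MeasurableEquiv.toLp 2 (Fin d → ℝ)))
      = fun y => (fun x : EuclideanSpace ℝ (Fin d) => gphi d v (‖x - m‖ ^ 2))
        ((MeasurableEquiv.toLp 2 (Fin d → ℝ)) y) from rfl]
  have hmeas : Measurable (fun x : EuclideanSpace ℝ (Fin d) => gphi d v (‖x - m‖ ^ 2)) := by
    apply Measurable.comp (g := gphi d v) (f := fun x : EuclideanSpace ℝ (Fin d) => ‖x - m‖ ^ 2)
    · exact Measurable.ennreal_ofReal (by fun_prop)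
    · fun_prop
  rw [map_withDensity_equiv ((MeasurableEquiv.toLp 2 (Fin d → ℝ))) volume
    (fun x => gphi d v (‖x - m‖ ^ 2)) hmeas,
    ← MeasurableEquiv.symm_symm (MeasurableEquiv.toLp 2 (Fin d → ℝ)),
    (MeasurePreserving.symm _ (EuclideanSpace.volume_preserving_symm_measurableEquiv_toLp (Fin d))).map_eq]

open Real in
lemma gaussN_halfspace_s12 (d : ℕ) (hd : 1 ≤ d) (m : EuclideanSpace ℝ (Fin d))
    {v : ℝ≥0} (hv : v ≠ 0) (θ : EuclideanSpace ℝ (Fin d)) (hθ : θ ≠ 0) (r : ℝ) :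
    gaussN d m v {x | ⟪θ, x⟫ ≤ r} =
      gaussianReal 0 v (Set.Iic ((r - ⟪θ, m⟫) / ‖θ‖)) := by
  have hθpos : (0:ℝ) < ‖θ‖ := norm_pos_iff.mpr hθ
  set i0 : Fin d := ⟨0, hd⟩ with hi0
  set u : EuclideanSpace ℝ (Fin d) := ‖θ‖⁻¹ • θ with hu_def
  have hu : ‖u‖ = 1 := by
    rw [hu_def, norm_smul, norm_inv, norm_norm, inv_mul_cancel₀ hθpos.ne']
  -- an orthonormal basis with `b i0 = u`
  obtain ⟨b, hb⟩ := Orthonormal.exists_orthonormalBasis_extension_of_card_eq (𝕜 := ℝ)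
    (by simp) (v := fun _ : Fin d => u) (s := {i0})
    ⟨fun i => hu, fun i j hij => absurd (Subsingleton.elim i j) hij⟩
  have hbi0 : b i0 = u := hb i0 rfl
  -- the measurable equivalence `x ↦ b.repr (x - m)`
  let e₂ := b.repr.toHomeomorph.toMeasurableEquiv
  let e₁ : EuclideanSpace ℝ (Fin d) ≃ᵐ EuclideanSpace ℝ (Fin d) := MeasurableEquiv.subRight m
  let ψ := e₁.trans e₂
  have hψ : ∀ x, ψ x = b.repr (x - m) := fun x => rfl
  set c' : ℝ := (r - ⟪θ, m⟫) / ‖θ‖ with hc'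
  -- the half-space is the preimage of a coordinate half-space
  have hset : {x : EuclideanSpace ℝ (Fin d) | ⟪θ, x⟫ ≤ r} = ψ ⁻¹' {y : EuclideanSpace ℝ (Fin d) | y i0 ≤ c'} := by
    ext x
    simp only [Set.mem_setOf_eq, Set.mem_preimage, hψ]
    have : (b.repr (x - m)) i0 = (⟪θ, x⟫ - ⟪θ, m⟫) / ‖θ‖ := by
      rw [b.repr_apply_apply, hbi0, hu_def, real_inner_smul_left, inner_sub_right]
      rw [div_eq_inv_mul]
    rw [this, hc', div_le_div_iff_of_pos_right hθpos]
    constructor <;> intro hx <;> linarith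
  rw [hset, ← Measure.map_apply ψ.measurable
    (measurableSet_le (by fun_prop) measurable_const)]
  -- pushforward of the gaussian under ψ is the centered gaussian
  have hmap : (gaussN d m v).map ψ = gaussN d 0 v := by
    rw [gaussN_eq_withDensity d m hv, gaussN_eq_withDensity d 0 hv]
    have hd2 : (fun x : EuclideanSpace ℝ (Fin d) => gphi d v (‖x - m‖ ^ 2))
        = fun x => (fun y : EuclideanSpace ℝ (Fin d) => gphi d v (‖y - 0‖ ^ 2)) (ψ x) := by
      funext x
      simp only [hψ, sub_zero, b.repr.norm_map]
    rw [hd2]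
    have hmeas : Measurable (fun y : EuclideanSpace ℝ (Fin d) => gphi d v (‖y - 0‖ ^ 2)) := by
      apply Measurable.comp (g := gphi d v) (f := fun y : EuclideanSpace ℝ (Fin d) => ‖y - 0‖ ^ 2)
      · exact Measurable.ennreal_ofReal (by fun_prop)
      · fun_prop
    rw [map_withDensity_equiv ψ volume _ hmeas]
    congr 1
    have hcoe : ⇑ψ = ⇑b.repr ∘ (fun x => x - m) := rfl
    rw [hcoe]
    exact (b.repr.measurePreserving.comp (measurePreserving_sub_right volume m)).map_eq
  rw [hmap]
  -- the centered gaussian of a coordinate half-space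
  rw [gaussN, Measure.map_apply (MeasurableEquiv.measurable _)
    (measurableSet_le (by fun_prop) measurable_const)]
  have hpre : (MeasurableEquiv.toLp 2 (Fin d → ℝ)) ⁻¹' {y : EuclideanSpace ℝ (Fin d) | y i0 ≤ c'}
      = Set.pi Set.univ (Function.update (fun _ : Fin d => (Set.univ : Set ℝ)) i0 (Set.Iic c')) := by
    ext x
    simp only [Set.mem_preimage, Set.mem_setOf_eq, Set.mem_pi, Set.mem_univ, true_implies]
    constructor
    · intro hx i
      by_cases hi : i = i0
      · subst hi; rw [Function.update_self]; exact hx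
      · rw [Function.update_of_ne hi]; trivial
    · intro hx
      have := hx i0
      rwa [Function.update_self] at this
  rw [hpre, Measure.pi_pi]
  rw [Finset.prod_eq_single i0 (fun i _ hi => by
      rw [Function.update_of_ne hi]; simp) (fun h => absurd (Finset.mem_univ i0) h)]
  rw [Function.update_self]
  simp

lemma robust_set {d : ℕ} (hd : 1 ≤ d) {ε : ℝ} (hε : 0 ≤ ε) (θ : EuclideanSpace ℝ (Fin d)) :
    {x : EuclideanSpace ℝ (Fin d) |
        ∃ δ : EuclideanSpace ℝ (Fin d), linfnorm δ ≤ ε ∧ ⟪θ, x + δ⟫ ≤ 0}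
      = {x : EuclideanSpace ℝ (Fin d) | ⟪θ, x⟫ ≤ ε * l1norm θ} := by
  haveI : Nonempty (Fin d) := ⟨⟨0, hd⟩⟩
  have hinner : ∀ a b : EuclideanSpace ℝ (Fin d), ⟪a, b⟫ = ∑ i, a i * b i := by
    intro a b
    simp [PiLp.inner_apply, RCLike.inner_apply, mul_comm]
  ext x
  simp only [Set.mem_setOf_eq]
  constructor
  · rintro ⟨δ, hδ, hle⟩
    have habs : |⟪θ, δ⟫| ≤ ε * l1norm θ := by
      rw [hinner, l1norm, Finset.mul_sum]
      refine (Finset.abs_sum_le_sum_abs _ _).trans (Finset.sum_le_sum fun i _ => ?_)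
      rw [abs_mul]
      have hδi : |δ i| ≤ ε := by
        rw [linfnorm] at hδ
        exact le_trans (le_ciSup (Set.Finite.bddAbove (Set.finite_range fun j => |δ j|)) i) hδ
      calc |θ i| * |δ i| ≤ |θ i| * ε := by
            exact mul_le_mul_of_nonneg_left hδi (abs_nonneg _)
        _ = ε * |θ i| := mul_comm _ _
    rw [inner_add_right] at hle
    have := neg_abs_le ⟪θ, δ⟫
    linarith
  · intro hx
    refine ⟨WithLp.toLp 2 (fun i => if 0 ≤ θ i then -ε else ε : Fin d → ℝ), ?_, ?_⟩
    · rw [linfnorm]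
      refine ciSup_le fun i => ?_
      by_cases hi : 0 ≤ θ i <;> simp [hi, abs_of_nonneg hε]
    · rw [inner_add_right, hinner θ, hinner θ]
      have hsum : ∀ i : Fin d,
          θ i * (WithLp.toLp 2 (fun i => if 0 ≤ θ i then -ε else ε : Fin d → ℝ)) i = -(ε * |θ i|) := by
        intro i
        by_cases hi : 0 ≤ θ i
        · simp only [PiLp.toLp_apply, hi, if_pos]
          rw [abs_of_nonneg hi]; ring
        · simp only [PiLp.toLp_apply, hi, if_neg, not_false_iff]
          rw [abs_of_neg (lt_of_not_ge hi)]; ring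
      rw [Finset.sum_congr rfl fun i _ => hsum i, Finset.sum_neg_distrib, ← Finset.mul_sum]
      have hl : (ε * l1norm θ) = ε * ∑ i, |θ i| := by rw [l1norm]
      rw [hinner θ x] at hx
      linarith [hx, hl]

lemma robust_set' {d : ℕ} (hd : 1 ≤ d) {ε : ℝ} (hε : 0 ≤ ε) (θ : EuclideanSpace ℝ (Fin d)) :
    {x : EuclideanSpace ℝ (Fin d) |
        ∃ δ : EuclideanSpace ℝ (Fin d), linfnorm δ ≤ ε ∧ 0 ≤ ⟪θ, x + δ⟫}
      = {x : EuclideanSpace ℝ (Fin d) | ⟪-θ, x⟫ ≤ ε * l1norm (-θ)} := by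
  rw [← robust_set hd hε (-θ)]
  ext x
  simp only [Set.mem_setOf_eq, inner_neg_left, neg_add_le_iff_le_add, neg_nonpos,
    neg_le, neg_zero]

/-- The `ℓ∞`-robust classification error is monotone in the margin statistic
`(⟨θ,μ⟩ − ε‖θ‖₁)/‖θ‖₂`: if `θ₁` has a larger (or equal) statistic than `θ₂`, then
`PE^{∞,ε}(θ₁) ≤ PE^{∞,ε}(θ₂)`. -/
theorem stmt12 (d : ℕ) (hd : 1 ≤ d) (μ : EuclideanSpace ℝ (Fin d)) (σ : ℝ) (hσ : 0 < σ)
    (ε : ℝ) (hε : 0 ≤ ε)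
    (PE : EuclideanSpace ℝ (Fin d) → ℝ)
    (hPE : ∀ θ, PE θ =
      1 / 2 * (gaussN d μ ⟨σ ^ 2, sq_nonneg σ⟩
        {x | ∃ δ : EuclideanSpace ℝ (Fin d), linfnorm δ ≤ ε ∧ ⟪θ, x + δ⟫ ≤ 0}).toReal
      + 1 / 2 * (gaussN d (-μ) ⟨σ ^ 2, sq_nonneg σ⟩
          {x | ∃ δ : EuclideanSpace ℝ (Fin d), linfnorm δ ≤ ε ∧ 0 ≤ ⟪θ, x + δ⟫}).toReal)
    (θ₁ θ₂ : EuclideanSpace ℝ (Fin d)) (hθ₁ : θ₁ ≠ 0) (hθ₂ : θ₂ ≠ 0)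
    (h : (⟪θ₂, μ⟫ - ε * l1norm θ₂) / ‖θ₂‖ ≤ (⟪θ₁, μ⟫ - ε * l1norm θ₁) / ‖θ₁‖) :
    PE θ₁ ≤ PE θ₂ := by
  set v : ℝ≥0 := ⟨σ ^ 2, sq_nonneg σ⟩ with hv_def
  have hv : v ≠ 0 := by
    intro hcon
    have : σ ^ 2 = 0 := congrArg (fun x : ℝ≥0 => (x : ℝ)) hcon
    exact (pow_ne_zero 2 hσ.ne') this
  have key : ∀ θ : EuclideanSpace ℝ (Fin d), θ ≠ 0 →
      PE θ = (gaussianReal 0 v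
        (Set.Iic (-((⟪θ, μ⟫ - ε * l1norm θ) / ‖θ‖)))).toReal := by
    intro θ hθ
    rw [hPE θ, robust_set hd hε θ, robust_set' hd hε θ,
      gaussN_halfspace_s12 d hd μ hv θ hθ (ε * l1norm θ),
      gaussN_halfspace_s12 d hd (-μ) hv (-θ) (neg_ne_zero.mpr hθ) (ε * l1norm (-θ))]
    have h1 : l1norm (-θ) = l1norm θ := by
      simp [l1norm]
    have h2 : ⟪(-θ : EuclideanSpace ℝ (Fin d)), -μ⟫ = ⟪θ, μ⟫ := by
      rw [inner_neg_neg]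
    rw [h1, h2, norm_neg]
    have h3 : (ε * l1norm θ - ⟪θ, μ⟫) / ‖θ‖ = -((⟪θ, μ⟫ - ε * l1norm θ) / ‖θ‖) := by
      rw [← neg_div, neg_sub]
    rw [h3]
    ring
  rw [key θ₁ hθ₁, key θ₂ hθ₂]
  refine ENNReal.toReal_mono (measure_ne_top _ _) (measure_mono ?_)
  exact Set.Iic_subset_Iic.mpr (neg_le_neg h)
end

section
/- Let d ≥ 1, θ ∈ ℝ^d with θ ≠ 0, σ_s > 0 and x ∈ ℝ^d. Then N(0, σ_s²I_d)({δ : ⟨θ, x + δ⟩ > 0}) ≥ 1/2 if and only if ⟨θ, x⟩ ≥ 0. In particular, the randomized-smoothing majority-vote classifier obtained from the linear classifier sign(⟨θ,·⟩) by Gaussian smoothing agrees with the linear classifier at every point x with ⟨θ, x⟩ ≠ 0. -/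
open MeasureTheory ProbabilityTheory
open scoped RealInnerProductSpace NNReal ENNReal

lemma pi_ac : ∀ (n : ℕ) (μ ν : Fin n → Measure ℝ), (∀ i, SigmaFinite (μ i)) →
    (∀ i, SigmaFinite (ν i)) → (∀ i, μ i ≪ ν i) → Measure.pi μ ≪ Measure.pi ν := by
  intro n
  induction n with
  | zero =>
    intro μ ν _ _ _
    rw [Measure.pi_of_empty μ, Measure.pi_of_empty ν]
  | succ n ih =>
    intro μ ν hμ hν h
    have hμ' := @measurePreserving_piFinSuccAbove n (fun _ => ℝ) _ μ hμ 0
    have hν' := @measurePreserving_piFinSuccAbove n (fun _ => ℝ) _ ν hν 0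
    rw [← (hμ'.symm _).map_eq, ← (hν'.symm _).map_eq]
    refine Measure.AbsolutelyContinuous.map ?_ (MeasurableEquiv.measurable _)
    have : ∀ i, SigmaFinite (ν ((0 : Fin (n+1)).succAbove i)) := fun i => hν _
    exact Measure.AbsolutelyContinuous.prod (h 0)
      (ih _ _ (fun i => hμ _) (fun i => hν _) (fun i => h _))

lemma gauss_neg (v : ℝ≥0) : (gaussianReal 0 v).map (fun a : ℝ => -a) = gaussianReal 0 v := by
  have h := gaussianReal_map_const_mul (μ := 0) (v := v) (-1)
  have h1 : (fun a : ℝ => -1 * a) = (fun a : ℝ => -a) := by funext a; ring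
  have h2 : (⟨(-1 : ℝ)^2, sq_nonneg _⟩ : ℝ≥0) = 1 := by ext; norm_num
  rw [show ((-1 : ℝ) * ·) = (fun a : ℝ => -a) from h1] at h
  rw [h]; congr 1
  · norm_num
  · ext; norm_num

lemma pi_gauss_neg (n : ℕ) (v : ℝ≥0) :
    (Measure.pi fun _ : Fin n => gaussianReal 0 v).map (fun y => -y)
      = Measure.pi fun _ : Fin n => gaussianReal 0 v := by
  refine (Measure.pi_eq (fun s hs => ?_)).symm
  rw [Measure.map_apply measurable_neg (MeasurableSet.univ_pi hs)]
  have : (fun y : Fin n → ℝ => -y) ⁻¹' Set.univ.pi s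
      = Set.univ.pi (fun i => (fun a : ℝ => -a) ⁻¹' s i) := by
    ext y; simp [Pi.neg_apply]
  rw [this, Measure.pi_pi]
  refine Finset.prod_congr rfl fun i _ => ?_
  conv_rhs => rw [← gauss_neg v]
  rw [Measure.map_apply measurable_neg (hs i)]

/-- `N(0, σ_s²I_d)({δ : ⟨θ, x+δ⟩ > 0}) ≥ 1/2` iff `⟨θ, x⟩ ≥ 0`; in particular,
at every `x` with `⟨θ,x⟩ ≠ 0` the Gaussian-smoothed majority-vote classifier of
`sign(⟨θ,·⟩)` agrees with the linear classifier itself. -/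
theorem stmt14 (d : ℕ) (hd : 1 ≤ d) (θ : EuclideanSpace ℝ (Fin d)) (hθ : θ ≠ 0)
    (σs : ℝ) (hσs : 0 < σs) (x : EuclideanSpace ℝ (Fin d)) :
    ((1 : ℝ≥0∞) / 2 ≤ gaussN d 0 ⟨σs ^ 2, sq_nonneg σs⟩ {δ | 0 < ⟪θ, x + δ⟫}
      ↔ 0 ≤ ⟪θ, x⟫) ∧
    (⟪θ, x⟫ ≠ 0 →
      ((1 : ℝ≥0∞) / 2 ≤ gaussN d 0 ⟨σs ^ 2, sq_nonneg σs⟩ {δ | 0 < ⟪θ, x + δ⟫}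
        ↔ 0 < ⟪θ, x⟫)) := by
  set v : ℝ≥0 := ⟨σs ^ 2, sq_nonneg σs⟩ with hv_def
  have hv : v ≠ 0 := by
    intro h
    have : σs ^ 2 = 0 := congrArg NNReal.toReal h
    exact absurd (pow_eq_zero_iff (n := 2) (by norm_num) |>.mp this) hσs.ne'
  set c : ℝ := ⟪θ, x⟫ with hc_def
  set π : Measure (Fin d → ℝ) := Measure.pi fun _ => gaussianReal 0 v with hπ_def
  set L : (Fin d → ℝ) → ℝ := fun y => ∑ i, θ i * y i with hL_def
  have hLcont : Continuous L := by
    exact continuous_finset_sum _ fun i _ => (continuous_const.mul (continuous_apply i))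
  have hLmeas : Measurable L := hLcont.measurable
  -- surjectivity of L
  obtain ⟨i₀, hi₀⟩ : ∃ i, θ i ≠ 0 := by
    by_contra h
    push_neg at h
    exact hθ (by ext i; simpa using h i)
  have hS : (0 : ℝ) < ∑ i, θ i ^ 2 := by
    have h1 : θ i₀ ^ 2 ≤ ∑ i, θ i ^ 2 :=
      Finset.single_le_sum (fun i _ => sq_nonneg (θ i)) (Finset.mem_univ i₀)
    have h2 : 0 < θ i₀ ^ 2 := by positivity
    linarith
  have hLsurj : Function.Surjective L := by
    intro t
    refine ⟨fun i => (t / ∑ j, θ j ^ 2) * θ i, ?_⟩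
    have hsum : ∑ i, θ i * ((t / ∑ j, θ j ^ 2) * θ i)
        = (t / ∑ j, θ j ^ 2) * ∑ i, θ i ^ 2 := by
      rw [Finset.mul_sum]
      exact Finset.sum_congr rfl fun i _ => by ring
    simp only [hL_def]
    rw [hsum]
    field_simp
  -- the pushforward measure
  set ρ : Measure ℝ := π.map L with hρ_def
  haveI : IsProbabilityMeasure π := by rw [hπ_def]; infer_instance
  haveI hρprob : IsProbabilityMeasure ρ := Measure.isProbabilityMeasure_map hLmeas.aemeasurable
  haveI : (gaussianReal 0 v).IsOpenPosMeasure :=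
    (gaussianReal_absolutelyContinuous' 0 hv).isOpenPosMeasure
  haveI : π.IsOpenPosMeasure := by rw [hπ_def]; infer_instance
  haveI hρpos : ρ.IsOpenPosMeasure := hLcont.isOpenPosMeasure_map hLsurj
  -- the kernel hyperplane is null
  have hρ0 : ρ {0} = 0 := by
    rw [hρ_def, Measure.map_apply hLmeas (measurableSet_singleton 0)]
    set f : (Fin d → ℝ) →ₗ[ℝ] ℝ :=
      { toFun := L
        map_add' := fun y z => by simp [hL_def, mul_add, Finset.sum_add_distrib]
        map_smul' := fun r y => by simp [hL_def, Finset.mul_sum]; congr 1; ext i; ring }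
    have hker : L ⁻¹' {0} = (LinearMap.ker f : Set (Fin d → ℝ)) := by
      ext y; simp [LinearMap.mem_ker, f]
    have hne : LinearMap.ker f ≠ ⊤ := by
      intro h
      have hf0 : f (fun i => θ i) = 0 := by
        have := LinearMap.ker_eq_top.mp h
        rw [this]; rfl
      have : ∑ i, θ i ^ 2 = 0 := by
        simpa [f, hL_def, sq] using hf0
      linarith
    have hvol : (volume : Measure (Fin d → ℝ)) (LinearMap.ker f : Set (Fin d → ℝ)) = 0 :=
      Measure.addHaar_submodule _ _ hne
    have hac : π ≪ (volume : Measure (Fin d → ℝ)) := by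
      rw [hπ_def, MeasureTheory.volume_pi]
      exact pi_ac d _ _ (fun i => inferInstance) (fun i => inferInstance)
        (fun i => gaussianReal_absolutelyContinuous 0 hv)
    rw [hker]
    exact hac hvol
  -- symmetry
  have hsymm : ∀ t : ℝ, ρ (Set.Ioi t) = ρ (Set.Iio (-t)) := by
    intro t
    rw [hρ_def, Measure.map_apply hLmeas measurableSet_Ioi,
      Measure.map_apply hLmeas measurableSet_Iio]
    have hLneg : ∀ y, L (-y) = -L y := fun y => by
      simp [hL_def, mul_neg, Finset.sum_neg_distrib]
    calc π (L ⁻¹' Set.Ioi t)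
        = (π.map (fun y => -y)) (L ⁻¹' Set.Ioi t) := by rw [hπ_def, pi_gauss_neg]
      _ = π ((fun y => -y) ⁻¹' (L ⁻¹' Set.Ioi t)) := by
          rw [Measure.map_apply measurable_neg (hLmeas measurableSet_Ioi)]
      _ = π (L ⁻¹' Set.Iio (-t)) := by
          congr 1
          ext y
          simp only [Set.mem_preimage, Set.mem_Ioi, Set.mem_Iio, hLneg]
          constructor <;> intro h <;> linarith
  -- half
  have hhalf : ρ (Set.Ioi (0 : ℝ)) = 1 / 2 := by
    have hcompl : ρ (Set.Ioi (0:ℝ)) + ρ (Set.Iic (0:ℝ)) = 1 := by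
      rw [← Set.compl_Iic, measure_compl measurableSet_Iic (measure_ne_top ρ _), measure_univ,
        tsub_add_cancel_of_le prob_le_one]
    have hIic : ρ (Set.Iic (0:ℝ)) = ρ (Set.Iio (0:ℝ)) := by
      have hset : Set.Iic (0:ℝ) = Set.Iio 0 ∪ {0} := by
        ext a; simp [le_iff_lt_or_eq]
      rw [hset, measure_union (by rw [Set.disjoint_singleton_right]; simp)
        (measurableSet_singleton 0), hρ0, add_zero]
    have hIio : ρ (Set.Iio (0:ℝ)) = ρ (Set.Ioi (0:ℝ)) := by
      have := hsymm 0
      rw [neg_zero] at this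
      exact this.symm
    rw [hIic, hIio, ← two_mul] at hcompl
    rw [ENNReal.eq_div_iff (by norm_num) (by norm_num)]
    exact hcompl
  -- identify the target measure
  have hcontS : Continuous fun δ : EuclideanSpace ℝ (Fin d) => (⟪θ, x + δ⟫ : ℝ) :=
    Continuous.inner continuous_const (continuous_const.add continuous_id)
  have hSmeas : MeasurableSet {δ : EuclideanSpace ℝ (Fin d) | 0 < ⟪θ, x + δ⟫} :=
    (isOpen_lt continuous_const hcontS).measurableSet
  have hkey : gaussN d 0 v {δ | 0 < ⟪θ, x + δ⟫} = ρ (Set.Ioi (-c)) := by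
    have h0 : (fun i : Fin d => gaussianReal ((0 : EuclideanSpace ℝ (Fin d)) i) v)
        = fun _ => gaussianReal 0 v := by
      funext i
      norm_num
    rw [gaussN, h0, Measure.map_apply (MeasurableEquiv.measurable _) hSmeas, hρ_def,
      Measure.map_apply hLmeas measurableSet_Ioi, hπ_def]
    congr 1
    ext y
    simp only [Set.mem_preimage, Set.mem_setOf_eq, Set.mem_Ioi]
    have heq : (⟪θ, x + (MeasurableEquiv.toLp 2 (Fin d → ℝ)) y⟫ : ℝ) = c + L y := by
      rw [inner_add_right, ← hc_def]
      congr 1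
      simp [hL_def, PiLp.inner_apply, mul_comm]
    rw [heq]
    constructor <;> intro h <;> linarith
  rw [hkey]
  -- main argument
  have hfwd : (1 : ℝ≥0∞) / 2 ≤ ρ (Set.Ioi (-c)) → 0 ≤ c := by
    intro h
    by_contra hc
    push_neg at hc
    have hsub : Set.Ioo (0:ℝ) (-c) ∪ Set.Ioi (-c) ⊆ Set.Ioi 0 := by
      rintro a (ha | ha)
      · exact ha.1
      · exact lt_trans (show (0:ℝ) < -c by linarith) ha
    have hdisj : Disjoint (Set.Ioo (0:ℝ) (-c)) (Set.Ioi (-c)) := by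
      rw [Set.disjoint_left]
      rintro a ha hb
      exact absurd hb (not_lt.mpr ha.2.le)
    have hpos : 0 < ρ (Set.Ioo (0:ℝ) (-c)) :=
      isOpen_Ioo.measure_pos ρ (Set.nonempty_Ioo.mpr (by linarith))
    have hchain : ρ (Set.Ioo (0:ℝ) (-c)) + ρ (Set.Ioi (-c)) ≤ (1 : ℝ≥0∞) / 2 := by
      rw [← measure_union hdisj measurableSet_Ioi, ← hhalf]
      exact measure_mono hsub
    have hlt : ρ (Set.Ioi (-c)) < ρ (Set.Ioo (0:ℝ) (-c)) + ρ (Set.Ioi (-c)) := by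
      rw [add_comm]
      exact ENNReal.lt_add_right (measure_ne_top _ _) hpos.ne'
    exact absurd (lt_of_lt_of_le hlt hchain) (not_lt.mpr h)
  have hbwd : 0 ≤ c → (1 : ℝ≥0∞) / 2 ≤ ρ (Set.Ioi (-c)) := by
    intro h
    rw [← hhalf]
    exact measure_mono (Set.Ioi_subset_Ioi (by linarith))
  constructor
  · exact ⟨hfwd, hbwd⟩
  · intro hne
    constructor
    · intro h
      exact lt_of_le_of_ne (hfwd h) (Ne.symm hne)
    · intro h
      exact hbwd h.le
end
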